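/- arXiv:1011.1699 — 5 statements merged into one kernel-verified Lean document; each statement's English description precedes it below -/
import Mathlib

section
/- (Equilibrium states concentrate on minimizing measures) Let f : X → ℝ be continuous, let β_n → +∞ be a sequence of positive reals, and for each n let μ_n ∈ 𝔐 be an equilibrium state for the potential −β_n a + f, i.e. h(μ_n) + ∫_X (−β_n a + f) dμ_n = P(−β_n a + f), where P(g) := sup_{μ∈𝔐} ( h(μ) + ∫_X g dμ ). Then ∫_X a dμ_n → 0 as n → ∞, and every weak limit point μ_∞ of the sequence (μ_n) is an invariant minimizing measure: μ_∞ ∈ 𝔐₀. -/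
open MeasureTheory Filter Topology Set

noncomputable section

/-- A continuous flow on `X`. -/
def IsFlow {X : Type*} [TopologicalSpace X] (Φ : ℝ → X → X) : Prop :=
  Continuous (fun p : ℝ × X => Φ p.1 p.2) ∧ Φ 0 = id ∧ ∀ t s : ℝ, Φ (t + s) = Φ t ∘ Φ s

/-- The set of flow-invariant Borel probability measures. -/
def Minv {X : Type*} [TopologicalSpace X] [MeasurableSpace X] (Φ : ℝ → X → X) :
    Set (ProbabilityMeasure X) :=
  {μ | ∀ t : ℝ, (μ : Measure X).map (Φ t) = (μ : Measure X)}

/-- The topological support of a measure. -/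
def msupport {X : Type*} [TopologicalSpace X] [MeasurableSpace X] (μ : Measure X) : Set X :=
  {x | ∀ U : Set X, IsOpen U → x ∈ U → 0 < μ U}

/-- The undamped set `K`: the closure of the union of the supports of all
minimizing invariant measures. -/
def Kset {X : Type*} [TopologicalSpace X] [MeasurableSpace X] (Φ : ℝ → X → X) (a : X → ℝ) :
    Set X :=
  closure (⋃ μ ∈ {μ ∈ Minv Φ | ∫ x, a x ∂(μ : Measure X) = 0}, msupport (μ : Measure X))

/-- Abstract pressure: `P(g) = sup over invariant measures of h(μ) + ∫ g dμ`. -/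
def Pres {X : Type*} [TopologicalSpace X] [MeasurableSpace X] (Φ : ℝ → X → X)
    (h : ProbabilityMeasure X → ℝ) (g : X → ℝ) : ℝ :=
  sSup {r : ℝ | ∃ μ ∈ Minv Φ, r = h μ + ∫ x, g x ∂(μ : Measure X)}

/-- Abstract pressure on `K`: sup over invariant measures with `μ(K) = 1`. -/
def PresK {X : Type*} [TopologicalSpace X] [MeasurableSpace X] (Φ : ℝ → X → X) (a : X → ℝ)
    (h : ProbabilityMeasure X → ℝ) (f : X → ℝ) : ℝ :=
  sSup {r : ℝ | ∃ μ ∈ Minv Φ,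
    (μ : Measure X) (Kset Φ a) = 1 ∧ r = h μ + ∫ x, f x ∂(μ : Measure X)}


/-- Equilibrium states concentrate on minimizing measures as the damping
strength `βₙ` tends to infinity. -/
theorem stmt7 {X : Type*} [MetricSpace X] [CompactSpace X] [MeasurableSpace X] [BorelSpace X]
    (Φ : ℝ → X → X) (hΦ : IsFlow Φ)
    (a : X → ℝ) (ha : Continuous a) (ha0 : ∀ x, 0 ≤ a x)
    (hmin : ∃ μ ∈ Minv Φ, ∫ x, a x ∂(μ : Measure X) = 0)
    (h : ProbabilityMeasure X → ℝ)
    (hbd : ∃ C : ℝ, ∀ μ ∈ Minv Φ, |h μ| ≤ C)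
    (husc : UpperSemicontinuousOn h (Minv Φ))
    (f : X → ℝ) (hf : Continuous f)
    (β : ℕ → ℝ) (hβpos : ∀ n, 0 < β n) (hβ : Tendsto β atTop atTop)
    (μn : ℕ → ProbabilityMeasure X) (hμn : ∀ n, μn n ∈ Minv Φ)
    (heq : ∀ n, h (μn n) + ∫ x, (-β n * a x + f x) ∂(μn n : Measure X) =
      Pres Φ h (fun x => -β n * a x + f x)) :
    Tendsto (fun n => ∫ x, a x ∂(μn n : Measure X)) atTop (𝓝 0) ∧
    ∀ μlim : ProbabilityMeasure X, MapClusterPt μlim atTop μn →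
      μlim ∈ Minv Φ ∧ ∫ x, a x ∂(μlim : Measure X) = 0 := by
  obtain ⟨μs, hμs, hμs0⟩ := hmin
  obtain ⟨C, hC⟩ := hbd
  -- continuity of each time-t map
  have φcont : ∀ t : ℝ, Continuous (Φ t) := fun t =>
    hΦ.1.comp (continuous_const.prodMk continuous_id)
  -- integrability of continuous functions
  have hint : ∀ (g : X → ℝ), Continuous g → ∀ μ : ProbabilityMeasure X,
      Integrable g (μ : Measure X) := fun g hg μ =>
    hg.integrable_of_hasCompactSupport (HasCompactSupport.of_compactSpace g)
  -- bound for f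
  set fb : BoundedContinuousFunction X ℝ := BoundedContinuousFunction.mkOfCompact ⟨f, hf⟩ with hfb
  set Cf : ℝ := ‖fb‖ with hCfdef
  have hCf : ∀ x, |f x| ≤ Cf := fun x => fb.norm_coe_le_norm x
  have hfbound : ∀ μ : ProbabilityMeasure X, |∫ x, f x ∂(μ : Measure X)| ≤ Cf := by
    intro μ
    have := norm_integral_le_of_norm_le_const (μ := (μ : Measure X)) (f := f) (C := Cf)
      (Filter.Eventually.of_forall fun x => hCf x)
    simpa using this
  have hanonneg : ∀ μ : ProbabilityMeasure X, 0 ≤ ∫ x, a x ∂(μ : Measure X) := fun μ =>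
    integral_nonneg ha0
  -- splitting the integral
  have hsplit : ∀ (b : ℝ) (μ : ProbabilityMeasure X),
      ∫ x, (-b * a x + f x) ∂(μ : Measure X)
        = -b * ∫ x, a x ∂(μ : Measure X) + ∫ x, f x ∂(μ : Measure X) := by
    intro b μ
    rw [integral_add ((hint a ha μ).const_mul _) (hint f hf μ), integral_const_mul]
  -- the key bound : β n * ∫ a dμn ≤ 2C + 2Cf
  have key : ∀ n, β n * ∫ x, a x ∂(μn n : Measure X) ≤ 2 * C + 2 * Cf := by
    intro n
    have hbdd : BddAbove {r : ℝ | ∃ μ ∈ Minv Φ,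
        r = h μ + ∫ x, (-β n * a x + f x) ∂(μ : Measure X)} := by
      refine ⟨C + Cf, ?_⟩
      rintro r ⟨μ, hμ, rfl⟩
      have h1 : h μ ≤ C := (abs_le.1 (hC μ hμ)).2
      have h2 : ∫ x, f x ∂(μ : Measure X) ≤ Cf := (abs_le.1 (hfbound μ)).2
      have h3 : -β n * ∫ x, a x ∂(μ : Measure X) ≤ 0 := by
        have := mul_nonneg (hβpos n).le (hanonneg μ)
        linarith
      rw [hsplit]
      linarith
    have hmem : h μs + ∫ x, f x ∂(μs : Measure X) ∈ {r : ℝ | ∃ μ ∈ Minv Φ,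
        r = h μ + ∫ x, (-β n * a x + f x) ∂(μ : Measure X)} := by
      refine ⟨μs, hμs, ?_⟩
      rw [hsplit, hμs0]
      ring
    have hP : h μs + ∫ x, f x ∂(μs : Measure X)
        ≤ Pres Φ h (fun x => -β n * a x + f x) := le_csSup hbdd hmem
    have heqn := heq n
    rw [hsplit] at heqn
    have h1 : |h (μn n)| ≤ C := hC (μn n) (hμn n)
    have h2 : |∫ x, f x ∂(μn n : Measure X)| ≤ Cf := hfbound (μn n)
    have h3 : |h μs| ≤ C := hC μs hμs
    have h4 : |∫ x, f x ∂(μs : Measure X)| ≤ Cf := hfbound μs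
    rw [abs_le] at h1 h2 h3 h4
    nlinarith [heqn, hP]
  -- Part 1 : the integrals tend to 0
  have h1 : Tendsto (fun n => ∫ x, a x ∂(μn n : Measure X)) atTop (𝓝 0) := by
    refine squeeze_zero (fun n => hanonneg (μn n)) (fun n => ?_)
      (Filter.Tendsto.div_atTop (tendsto_const_nhds (x := 2 * C + 2 * Cf)) hβ)
    rw [le_div_iff₀ (hβpos n), mul_comm]
    exact key n
  refine ⟨h1, fun μlim hcl => ?_⟩
  constructor
  · -- μlim ∈ Minv Φ, since Minv is closed
    have hMeq : Minv Φ = ⋂ t : ℝ, {μ : ProbabilityMeasure X |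
        μ.map (φcont t).measurable.aemeasurable = μ} := by
      ext μ
      simp only [Minv, Set.mem_setOf_eq, Set.mem_iInter]
      constructor
      · intro hm t
        apply ProbabilityMeasure.toMeasure_injective
        rw [ProbabilityMeasure.toMeasure_map]
        exact hm t
      · intro hm t
        have := congrArg (fun ν : ProbabilityMeasure X => (ν : Measure X)) (hm t)
        simpa [ProbabilityMeasure.toMeasure_map] using this
    have hclosed : IsClosed (Minv Φ) := by
      rw [hMeq]
      exact isClosed_iInter fun t =>
        isClosed_eq (ProbabilityMeasure.continuous_map (φcont t)) continuous_id
    have hmemcl : μlim ∈ closure (Minv Φ) := by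
      rw [mem_closure_iff_nhds]
      intro s hs
      obtain ⟨n, hn⟩ := (mapClusterPt_iff_frequently.1 hcl s hs).exists
      exact ⟨μn n, hn, hμn n⟩
    rwa [hclosed.closure_eq] at hmemcl
  · -- the limit integral is 0
    set ab : BoundedContinuousFunction X ℝ := BoundedContinuousFunction.mkOfCompact ⟨a, ha⟩
    have hacont : Continuous (fun μ : ProbabilityMeasure X => ∫ x, a x ∂(μ : Measure X)) := by
      have := ProbabilityMeasure.continuous_integral_boundedContinuousFunction (X := X) ab
      simpa [ab] using this
    have h2 : MapClusterPt (∫ x, a x ∂(μlim : Measure X)) atTop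
        ((fun μ : ProbabilityMeasure X => ∫ x, a x ∂(μ : Measure X)) ∘ μn) :=
      hcl.continuousAt_comp hacont.continuousAt
    have hle : map ((fun μ : ProbabilityMeasure X => ∫ x, a x ∂(μ : Measure X)) ∘ μn) atTop
        ≤ 𝓝 0 := h1
    have hne : (𝓝 (∫ x, a x ∂(μlim : Measure X)) ⊓ 𝓝 (0 : ℝ)).NeBot :=
      h2.clusterPt.mono hle
    exact eq_of_nhds_neBot hne
end
end

section
/- (Upper bound in the thermodynamic limit) Let f : X → ℝ be continuous, let β_n → +∞ be positive reals, and for each n let μ_n ∈ 𝔐 satisfy h(μ_n) + ∫_X (−β_n a + f) dμ_n = P(−β_n a + f), where P(g) := sup_{μ∈𝔐} ( h(μ) + ∫_X g dμ ). If μ_n converges weakly to μ_∞, then limsup_{n→∞} P(−β_n a + f) ≤ h(μ_∞) + ∫_X f dμ_∞ ≤ P_K(f), where P_K(f) := sup { h(μ) + ∫_X f dμ : μ ∈ 𝔐, μ(K) = 1 }. -/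
open MeasureTheory Filter Topology Set
open scoped ENNReal NNReal

noncomputable section

lemma msupport_compl_null {X : Type*} [TopologicalSpace X] [SecondCountableTopology X]
    [MeasurableSpace X] (μ : Measure X) : μ (msupport μ)ᶜ = 0 := by
  obtain ⟨b, hbc, -, hb⟩ := TopologicalSpace.exists_countable_basis X
  apply measure_mono_null (t := ⋃₀ {U ∈ b | μ U = 0})
  · intro x hx
    simp only [msupport, mem_compl_iff, mem_setOf_eq, not_forall] at hx
    obtain ⟨U, hU, hxU, hμU⟩ := hx
    have hμU0 : μ U = 0 := le_antisymm (not_lt.mp hμU) zero_le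
    obtain ⟨V, hVb, hxV, hVU⟩ := hb.exists_subset_of_mem_open hxU hU
    exact ⟨V, ⟨hVb, measure_mono_null hVU hμU0⟩, hxV⟩
  · rw [measure_sUnion_null_iff (hbc.mono (sep_subset _ _))]
    exact fun s hs => hs.2

/-- Upper bound in the thermodynamic limit. -/
theorem stmt8 {X : Type*} [MetricSpace X] [CompactSpace X] [MeasurableSpace X] [BorelSpace X]
    (Φ : ℝ → X → X) (hΦ : IsFlow Φ)
    (a : X → ℝ) (ha : Continuous a) (ha0 : ∀ x, 0 ≤ a x)
    (hmin : ∃ μ ∈ Minv Φ, ∫ x, a x ∂(μ : Measure X) = 0)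
    (h : ProbabilityMeasure X → ℝ)
    (hbd : ∃ C : ℝ, ∀ μ ∈ Minv Φ, |h μ| ≤ C)
    (husc : UpperSemicontinuousOn h (Minv Φ))
    (f : X → ℝ) (hf : Continuous f)
    (β : ℕ → ℝ) (hβpos : ∀ n, 0 < β n) (hβ : Tendsto β atTop atTop)
    (μn : ℕ → ProbabilityMeasure X) (hμn : ∀ n, μn n ∈ Minv Φ)
    (heq : ∀ n, h (μn n) + ∫ x, (-β n * a x + f x) ∂(μn n : Measure X) =
      Pres Φ h (fun x => -β n * a x + f x))
    (μlim : ProbabilityMeasure X) (hlim : Tendsto μn atTop (𝓝 μlim)) :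
    limsup (fun n => Pres Φ h (fun x => -β n * a x + f x)) atTop ≤
        h μlim + ∫ x, f x ∂(μlim : Measure X) ∧
      h μlim + ∫ x, f x ∂(μlim : Measure X) ≤ PresK Φ a h f := by
  classical
  obtain ⟨C, hC⟩ := hbd
  obtain ⟨ν, hν, hνa⟩ := hmin
  have hΦt : ∀ t : ℝ, Continuous (Φ t) := fun t => hΦ.1.comp (Continuous.prodMk_right t)
  -- integrability of continuous functions
  have intC : ∀ (g : X → ℝ), Continuous g → ∀ μ : ProbabilityMeasure X,
      Integrable g (μ : Measure X) := fun g hg μ =>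
    (BoundedContinuousFunction.mkOfCompact ⟨g, hg⟩).integrable _
  -- uniform bound on integrals of continuous functions
  have habs : ∀ (g : X → ℝ) (hg : Continuous g) (μ : ProbabilityMeasure X),
      ∫ x, g x ∂(μ : Measure X) ≤ ‖BoundedContinuousFunction.mkOfCompact ⟨g, hg⟩‖ := by
    intro g hg μ
    refine (le_abs_self _).trans ?_
    simpa [Real.norm_eq_abs] using
      (BoundedContinuousFunction.mkOfCompact ⟨g, hg⟩).norm_integral_le_norm (μ : Measure X)
  -- splitting the integral
  have hsplit : ∀ n, ∀ μ : ProbabilityMeasure X,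
      ∫ x, (-β n * a x + f x) ∂(μ : Measure X)
        = -β n * ∫ x, a x ∂(μ : Measure X) + ∫ x, f x ∂(μ : Measure X) := by
    intro n μ
    rw [integral_add ((intC a ha μ).const_mul _) (intC f hf μ), integral_const_mul]
  -- the pressure set is bounded above
  have hbddP : ∀ (g : X → ℝ), Continuous g →
      BddAbove {r : ℝ | ∃ μ ∈ Minv Φ, r = h μ + ∫ x, g x ∂(μ : Measure X)} := by
    intro g hg
    refine ⟨C + ‖BoundedContinuousFunction.mkOfCompact ⟨g, hg⟩‖, ?_⟩
    rintro r ⟨μ, hμ, rfl⟩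
    exact add_le_add (le_of_abs_le (hC μ hμ)) (habs g hg μ)
  -- a lower bound for the pressures
  have hPlow : ∀ n, h ν + ∫ x, f x ∂(ν : Measure X)
      ≤ Pres Φ h (fun x => -β n * a x + f x) := by
    intro n
    have hcont : Continuous (fun x => -β n * a x + f x) := by continuity
    have hmem : h ν + ∫ x, (-β n * a x + f x) ∂(ν : Measure X) ∈
        {r : ℝ | ∃ μ ∈ Minv Φ, r = h μ + ∫ x, (-β n * a x + f x) ∂(μ : Measure X)} :=
      ⟨ν, hν, rfl⟩
    have := le_csSup (hbddP _ hcont) hmem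
    rw [hsplit n ν, hνa, mul_zero, zero_add] at this
    exact this
  -- the value of the pressures
  have hPn : ∀ n, Pres Φ h (fun x => -β n * a x + f x)
      = h (μn n) + (-β n * ∫ x, a x ∂(μn n : Measure X) + ∫ x, f x ∂(μn n : Measure X)) := by
    intro n
    rw [← heq n, hsplit n (μn n)]
  -- consequences of weak convergence
  have hconv : ∀ (g : X → ℝ), Continuous g →
      Tendsto (fun n => ∫ x, g x ∂(μn n : Measure X)) atTop
        (𝓝 (∫ x, g x ∂(μlim : Measure X))) := fun g hg =>
    ProbabilityMeasure.tendsto_iff_forall_integral_tendsto.mp hlim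
      (BoundedContinuousFunction.mkOfCompact ⟨g, hg⟩)
  -- the limit measure is invariant
  have hμliminv : μlim ∈ Minv Φ := by
    intro t
    haveI : IsProbabilityMeasure ((μlim : Measure X).map (Φ t)) :=
      Measure.isProbabilityMeasure_map (hΦt t).measurable.aemeasurable
    apply ext_of_forall_lintegral_eq_of_IsFiniteMeasure
    intro g
    have hgc : Continuous (fun x => (g x : ℝ)) := NNReal.continuous_coe.comp g.continuous
    have key : ∫ x, (g x : ℝ) ∂((μlim : Measure X).map (Φ t))
        = ∫ x, (g x : ℝ) ∂(μlim : Measure X) := by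
      rw [integral_map (hΦt t).measurable.aemeasurable hgc.aestronglyMeasurable]
      have h1 := hconv (fun x => (g (Φ t x) : ℝ)) (hgc.comp (hΦt t))
      have h2 := hconv (fun x => (g x : ℝ)) hgc
      have heqn : ∀ n, ∫ x, (g (Φ t x) : ℝ) ∂(μn n : Measure X)
          = ∫ x, (g x : ℝ) ∂(μn n : Measure X) := by
        intro n
        conv_rhs => rw [← hμn n t]
        rw [integral_map (hΦt t).measurable.aemeasurable hgc.aestronglyMeasurable]
      exact tendsto_nhds_unique (h1.congr heqn) h2
    have fin1 : ∫⁻ x, (g x : ℝ≥0∞) ∂((μlim : Measure X).map (Φ t)) ≠ ⊤ :=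
      (BoundedContinuousFunction.lintegral_lt_top_of_nnreal _ g).ne
    have fin2 : ∫⁻ x, (g x : ℝ≥0∞) ∂(μlim : Measure X) ≠ ⊤ :=
      (BoundedContinuousFunction.lintegral_lt_top_of_nnreal _ g).ne
    apply (ENNReal.toReal_eq_toReal_iff' fin1 fin2).mp
    rw [BoundedContinuousFunction.toReal_lintegral_coe_eq_integral,
      BoundedContinuousFunction.toReal_lintegral_coe_eq_integral]
    exact key
  -- nonnegativity of integrals of a
  have hanonneg : ∀ μ : ProbabilityMeasure X, 0 ≤ ∫ x, a x ∂(μ : Measure X) :=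
    fun μ => integral_nonneg ha0
  set c : ℝ := h ν + ∫ x, f x ∂(ν : Measure X) with hc
  set D : ℝ := C + ‖BoundedContinuousFunction.mkOfCompact (⟨f, hf⟩ : C(X, ℝ))‖ - c with hD
  have hup : ∀ n, β n * ∫ x, a x ∂(μn n : Measure X) ≤ D := by
    intro n
    have h1 := hPlow n
    rw [hPn n] at h1
    have h2 : h (μn n) ≤ C := le_of_abs_le (hC _ (hμn n))
    have h3 := habs f hf (μn n)
    rw [hD, hc]
    linarith
  -- the limit measure is minimizing
  have halim : ∫ x, a x ∂(μlim : Measure X) = 0 := by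
    refine tendsto_nhds_unique (hconv a ha) ?_
    have hupper : Tendsto (fun n => D / β n) atTop (𝓝 0) :=
      Tendsto.div_atTop tendsto_const_nhds hβ
    apply tendsto_of_tendsto_of_tendsto_of_le_of_le tendsto_const_nhds hupper
    · exact fun n => hanonneg _
    · intro n
      rw [le_div_iff₀ (hβpos n)]
      calc (∫ x, a x ∂(μn n : Measure X)) * β n
          = β n * ∫ x, a x ∂(μn n : Measure X) := mul_comm _ _
        _ ≤ D := hup n
  constructor
  · -- first inequality
    have hcob : IsCoboundedUnder (· ≤ ·) atTop
        (fun n => Pres Φ h (fun x => -β n * a x + f x)) :=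
      isCoboundedUnder_le_of_le atTop hPlow
    apply le_of_forall_pos_le_add
    intro ε hε
    apply limsup_le_of_le hcob
    have ht : Tendsto μn atTop (𝓝[Minv Φ] μlim) :=
      tendsto_nhdsWithin_iff.mpr ⟨hlim, Eventually.of_forall hμn⟩
    have e1 : ∀ᶠ n in atTop, h (μn n) < h μlim + ε / 2 :=
      ht.eventually (husc μlim hμliminv (h μlim + ε / 2) (by linarith))
    have e2 : ∀ᶠ n in atTop, ∫ x, f x ∂(μn n : Measure X)
        < ∫ x, f x ∂(μlim : Measure X) + ε / 2 :=
      (hconv f hf).eventually_lt_const (by linarith)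
    filter_upwards [e1, e2] with n h1 h2
    rw [hPn n]
    have h3 : 0 ≤ β n * ∫ x, a x ∂(μn n : Measure X) :=
      mul_nonneg (hβpos n).le (hanonneg _)
    linarith
  · -- second inequality
    have hKmeas : (μlim : Measure X) (Kset Φ a) = 1 := by
      have h1 : msupport (μlim : Measure X) ⊆ Kset Φ a := by
        intro x hx
        apply subset_closure
        exact mem_biUnion (show μlim ∈ {μ ∈ Minv Φ | ∫ x, a x ∂(μ : Measure X) = 0}
          from ⟨hμliminv, halim⟩) hx
      have h0 : (μlim : Measure X) (Kset Φ a)ᶜ = 0 :=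
        measure_mono_null (compl_subset_compl.mpr h1) (msupport_compl_null _)
      exact (prob_compl_eq_zero_iff isClosed_closure.measurableSet).mp h0
    apply le_csSup
    · refine ⟨C + ‖BoundedContinuousFunction.mkOfCompact (⟨f, hf⟩ : C(X, ℝ))‖, ?_⟩
      rintro r ⟨μ, hμ, -, rfl⟩
      exact add_le_add (le_of_abs_le (hC μ hμ)) (habs f hf μ)
    · exact ⟨μlim, hμliminv, hKmeas, rfl⟩
end
end

section
/- (Corollary 1.4, variational form) Let f : X → ℝ be continuous and suppose P_K(f) < 0, where P_K(f) := sup { h(μ) + ∫_X f dμ : μ ∈ 𝔐, μ(K) = 1 }. Then there exists β > 0 such that P(−β a + f) < 0, where P(g) := sup_{μ∈𝔐} ( h(μ) + ∫_X g dμ ). -/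
open MeasureTheory Filter Topology Set

noncomputable section

open BoundedContinuousFunction
open scoped ENNReal NNReal

set_option linter.unusedSectionVars false
set_option maxHeartbeats 1000000

section Aux
variable {X : Type*} [MetricSpace X] [CompactSpace X] [MeasurableSpace X] [BorelSpace X]

lemma integral_dist_le (μ : ProbabilityMeasure X) (g g' : X →ᵇ ℝ) :
    dist (∫ x, g x ∂(μ : Measure X)) (∫ x, g' x ∂(μ : Measure X)) ≤ dist g g' := by
  rw [Real.dist_eq, ← integral_sub (g.integrable _) (g'.integrable _)]
  have : ∀ x, ‖g x - g' x‖ ≤ dist g g' := fun x => by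
    simpa [dist_eq_norm] using (g - g').norm_coe_le_norm x
  calc |∫ x, (g x - g' x) ∂(μ : Measure X)| ≤ dist g g' * ((μ : Measure X) univ).toReal :=
        norm_integral_le_of_norm_le_const (Eventually.of_forall this)
    _ = dist g g' := by simp

lemma exists_subseq_lim_integrals (μ : ℕ → ProbabilityMeasure X) :
    ∃ φ : ℕ → ℕ, StrictMono φ ∧ ∃ Λ : (X →ᵇ ℝ) → ℝ,
      ∀ g, Tendsto (fun n => ∫ x, g x ∂(μ (φ n) : Measure X)) atTop (𝓝 (Λ g)) := by
  have : TopologicalSpace.SeparableSpace (X →ᵇ ℝ) :=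
    (ContinuousMap.equivBoundedOfCompact X ℝ).surjective.denseRange.separableSpace
      (ContinuousMap.isUniformInducing_equivBoundedOfCompact X ℝ).uniformContinuous.continuous
  obtain ⟨u, hu⟩ := TopologicalSpace.exists_dense_seq (X →ᵇ ℝ)
  set s : Set (ℕ → ℝ) := Set.pi univ (fun i => Icc (-‖u i‖) ‖u i‖) with hs
  have hscomp : IsCompact s := isCompact_univ_pi (fun i => isCompact_Icc)
  set y : ℕ → (ℕ → ℝ) := fun n i => ∫ x, u i x ∂(μ n : Measure X) with hy
  have hymem : ∀ n, y n ∈ s := by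
    intro n i _
    have : |∫ x, u i x ∂(μ n : Measure X)| ≤ ‖u i‖ := by
      calc |∫ x, u i x ∂(μ n : Measure X)| ≤ ‖u i‖ * ((μ n : Measure X) univ).toReal :=
            norm_integral_le_of_norm_le_const (Eventually.of_forall (fun x => (u i).norm_coe_le_norm x))
        _ = ‖u i‖ := by simp
    exact abs_le.mp this
  obtain ⟨ℓ, -, φ, hφ, hlim⟩ := hscomp.tendsto_subseq hymem
  refine ⟨φ, hφ, ?_⟩
  have hcoord : ∀ i, Tendsto (fun n => ∫ x, u i x ∂(μ (φ n) : Measure X)) atTop (𝓝 (ℓ i)) := by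
    intro i
    have := (continuous_apply i).continuousAt.tendsto.comp hlim
    simpa [hy, Function.comp_def] using this
  have key : ∀ g : X →ᵇ ℝ, ∃ L, Tendsto (fun n => ∫ x, g x ∂(μ (φ n) : Measure X)) atTop (𝓝 L) := by
    intro g
    have hcauchy : CauchySeq (fun n => ∫ x, g x ∂(μ (φ n) : Measure X)) := by
      rw [Metric.cauchySeq_iff]
      intro ε hε
      obtain ⟨i, hi⟩ : ∃ i, dist g (u i) < ε / 4 := by
        obtain ⟨i, hi⟩ := hu.exists_dist_lt g (by positivity : (0:ℝ) < ε / 4)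
        exact ⟨i, by simpa [dist_comm] using hi⟩
      have hc := (hcoord i).cauchySeq
      rw [Metric.cauchySeq_iff] at hc
      obtain ⟨N, hN⟩ := hc (ε / 4) (by positivity)
      refine ⟨N, fun m hm n hn => ?_⟩
      have h1 := integral_dist_le (μ (φ m)) g (u i)
      have h2 := integral_dist_le (μ (φ n)) (u i) g
      have h3 := hN m hm n hn
      have h4 := dist_triangle4 (∫ x, g x ∂(μ (φ m) : Measure X))
        (∫ x, u i x ∂(μ (φ m) : Measure X)) (∫ x, u i x ∂(μ (φ n) : Measure X))
        (∫ x, g x ∂(μ (φ n) : Measure X))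
      have h5 : dist (u i) g = dist g (u i) := dist_comm _ _
      linarith
    exact cauchySeq_tendsto_of_complete hcauchy
  choose Λ hΛ using key
  exact ⟨Λ, hΛ⟩

def TTset (K : Set X) : Set (X →ᵇ ℝ) := {g | (∀ x, 0 ≤ g x) ∧ ∀ x ∈ K, 1 ≤ g x}

noncomputable def cRfun (Λ : (X →ᵇ ℝ) → ℝ) (K : Set X) : ℝ := sInf (Λ '' TTset K)

lemma riesz_limit_measure (Λ : (X →ᵇ ℝ) → ℝ)
    (Λ_mono : ∀ g g' : X →ᵇ ℝ, (∀ x, g x ≤ g' x) → Λ g ≤ Λ g')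
    (Λ_zero : Λ 0 = 0)
    (Λ_add : ∀ g g' : X →ᵇ ℝ, Λ (g + g') = Λ g + Λ g')
    (Λ_one : Λ (const X (1:ℝ)) = 1) :
    ∃ ν : ProbabilityMeasure X, ∀ G : Set X, IsOpen G →
      ∀ δ : ℝ, 0 < δ → ∃ g : X →ᵇ ℝ, (∀ x, 0 ≤ g x) ∧ (∀ x, g x ≤ G.indicator (fun _ => (1:ℝ)) x) ∧
        ENNReal.ofReal (Λ g) + ENNReal.ofReal δ ≥ (ν : Measure X) G := by
  classical
  have hone : ∀ K : Set X, const X (1:ℝ) ∈ TTset K := fun K =>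
    ⟨fun x => by norm_num, fun x _ => by norm_num⟩
  have hne : ∀ K : Set X, (Λ '' TTset K).Nonempty := fun K => ⟨Λ (const X 1), ⟨_, hone K, rfl⟩⟩
  have hΛnn : ∀ K : Set X, ∀ g ∈ TTset K, 0 ≤ Λ g := by
    intro K g hg
    have := Λ_mono 0 g (fun x => by simpa using hg.1 x)
    simpa [Λ_zero] using this
  have hbdd : ∀ K : Set X, BddBelow (Λ '' TTset K) :=
    fun K => ⟨0, by rintro r ⟨g, hg, rfl⟩; exact hΛnn K g hg⟩
  have hcnn : ∀ K : Set X, 0 ≤ cRfun Λ K := fun K =>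
    le_csInf (hne K) (by rintro r ⟨g, hg, rfl⟩; exact hΛnn K g hg)
  have hcle : ∀ K : Set X, ∀ g ∈ TTset K, cRfun Λ K ≤ Λ g := fun K g hg =>
    csInf_le (hbdd K) ⟨g, hg, rfl⟩
  have hcone : ∀ K : Set X, cRfun Λ K ≤ 1 := fun K => by
    simpa [Λ_one] using hcle K _ (hone K)
  have hmono : ∀ K₁ K₂ : Set X, K₁ ⊆ K₂ → cRfun Λ K₁ ≤ cRfun Λ K₂ := by
    intro K₁ K₂ hK
    apply csInf_le_csInf (hbdd K₁) (hne K₂)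
    apply image_mono
    rintro g ⟨h1, h2⟩
    exact ⟨h1, fun x hx => h2 x (hK hx)⟩
  have hsuple : ∀ K₁ K₂ : Set X, cRfun Λ (K₁ ∪ K₂) ≤ cRfun Λ K₁ + cRfun Λ K₂ := by
    intro K₁ K₂
    have H : ∀ g₁ ∈ TTset K₁, ∀ g₂ ∈ TTset K₂, cRfun Λ (K₁ ∪ K₂) ≤ Λ g₁ + Λ g₂ := by
      intro g₁ hg₁ g₂ hg₂
      have hmem : g₁ + g₂ ∈ TTset (K₁ ∪ K₂) := by
        constructor
        · intro x; simpa using add_nonneg (hg₁.1 x) (hg₂.1 x)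
        · rintro x (hx | hx) <;> simp only [coe_add, Pi.add_apply]
          · linarith [hg₁.2 x hx, hg₂.1 x]
          · linarith [hg₂.2 x hx, hg₁.1 x]
      simpa [Λ_add] using hcle _ _ hmem
    have h1 : ∀ g₁ ∈ TTset K₁, cRfun Λ (K₁ ∪ K₂) - Λ g₁ ≤ cRfun Λ K₂ := by
      intro g₁ hg₁
      refine le_csInf (hne K₂) ?_
      rintro r ⟨g₂, hg₂, rfl⟩
      linarith [H g₁ hg₁ g₂ hg₂]
    have h2 : cRfun Λ (K₁ ∪ K₂) - cRfun Λ K₂ ≤ cRfun Λ K₁ := by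
      refine le_csInf (hne K₁) ?_
      rintro r ⟨g₁, hg₁, rfl⟩
      linarith [h1 g₁ hg₁]
    linarith
  have hsupdisj : ∀ K₁ K₂ : Set X, IsClosed K₁ → IsClosed K₂ → Disjoint K₁ K₂ →
      cRfun Λ K₁ + cRfun Λ K₂ ≤ cRfun Λ (K₁ ∪ K₂) := by
    intro K₁ K₂ hc₁ hc₂ hd
    refine le_csInf (hne _) ?_
    rintro r ⟨g, hg, rfl⟩
    obtain ⟨f, hf0, hf1, hf01⟩ := exists_bounded_zero_one_of_closed hc₂ hc₁ hd.symm
    have hg₁ : g * f ∈ TTset K₁ := by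
      constructor
      · intro x
        simp only [coe_mul, Pi.mul_apply]
        exact mul_nonneg (hg.1 x) (hf01 x).1
      · intro x hx
        have : f x = 1 := hf1 hx
        simp only [coe_mul, Pi.mul_apply, this, mul_one]
        exact hg.2 x (Or.inl hx)
    have hg₂ : g - g * f ∈ TTset K₂ := by
      constructor
      · intro x
        simp only [coe_sub, coe_mul, Pi.sub_apply, Pi.mul_apply]
        nlinarith [hg.1 x, (hf01 x).1, (hf01 x).2]
      · intro x hx
        have : f x = 0 := hf0 hx
        simp only [coe_sub, coe_mul, Pi.sub_apply, Pi.mul_apply, this, mul_zero, sub_zero]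
        exact hg.2 x (Or.inr hx)
    have hsum : g * f + (g - g * f) = g := by ring
    have : Λ (g * f) + Λ (g - g * f) = Λ g := by rw [← Λ_add, hsum]
    linarith [hcle K₁ _ hg₁, hcle K₂ _ hg₂]
  -- the content
  set μc : Content X :=
    { toFun := fun K => Real.toNNReal (cRfun Λ K)
      mono' := fun K₁ K₂ h => Real.toNNReal_mono (hmono _ _ h)
      sup_disjoint' := by
        intro K₁ K₂ hd h₁ h₂
        show Real.toNNReal (cRfun Λ ((K₁ ⊔ K₂ : TopologicalSpace.Compacts X) : Set X)) =
          Real.toNNReal (cRfun Λ (K₁ : Set X)) + Real.toNNReal (cRfun Λ (K₂ : Set X))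
        have hle := hsuple (K₁ : Set X) K₂
        have hge := hsupdisj (K₁ : Set X) K₂ h₁ h₂ hd
        have : cRfun Λ ((K₁ : Set X) ∪ K₂) = cRfun Λ (K₁ : Set X) + cRfun Λ (K₂ : Set X) :=
          le_antisymm hle hge
        rw [TopologicalSpace.Compacts.coe_sup, this, Real.toNNReal_add (hcnn _) (hcnn _)]
      sup_le' := by
        intro K₁ K₂
        show Real.toNNReal (cRfun Λ ((K₁ ⊔ K₂ : TopologicalSpace.Compacts X) : Set X)) ≤
          Real.toNNReal (cRfun Λ (K₁ : Set X)) + Real.toNNReal (cRfun Λ (K₂ : Set X))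
        rw [TopologicalSpace.Compacts.coe_sup]
        refine le_trans (Real.toNNReal_mono (hsuple _ _)) (Real.toNNReal_add_le) } with hμc
  have hμcK : ∀ K : TopologicalSpace.Compacts X, (μc K : ℝ≥0∞) = ENNReal.ofReal (cRfun Λ K) :=
    fun K => rfl
  -- the measure
  have huniv : μc.measure univ = 1 := by
    rw [Content.measure_apply _ MeasurableSet.univ,
      μc.outerMeasure_of_isOpen univ isOpen_univ]
    apply le_antisymm
    · refine iSup₂_le fun K _ => ?_
      rw [hμcK]
      calc ENNReal.ofReal (cRfun Λ K) ≤ ENNReal.ofReal 1 :=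
            ENNReal.ofReal_le_ofReal (hcone _)
        _ = 1 := by simp
    · have h1 : (1:ℝ≥0∞) ≤ μc ⟨univ, isCompact_univ⟩ := by
        rw [hμcK]
        have : (1:ℝ) ≤ cRfun Λ univ := by
          refine le_csInf (hne _) ?_
          rintro r ⟨g, hg, rfl⟩
          have := Λ_mono (const X 1) g (fun x => by simpa using hg.2 x (mem_univ x))
          simpa [Λ_one] using this
        calc (1:ℝ≥0∞) = ENNReal.ofReal 1 := by simp
          _ ≤ ENNReal.ofReal (cRfun Λ univ) := ENNReal.ofReal_le_ofReal this
      exact le_trans h1 (μc.le_innerContent ⟨univ, isCompact_univ⟩ ⟨univ, isOpen_univ⟩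
        (by simp))
  have hprob : IsProbabilityMeasure μc.measure := ⟨huniv⟩
  refine ⟨⟨μc.measure, hprob⟩, ?_⟩
  intro G hG δ hδ
  -- ν G = innerContent; pick K with content close to it, then Urysohn
  have hν : ((⟨μc.measure, hprob⟩ : ProbabilityMeasure X) : Measure X) G =
      μc.innerContent ⟨G, hG⟩ := by
    show μc.measure G = _
    rw [Content.measure_apply _ hG.measurableSet, μc.outerMeasure_of_isOpen G hG]
  suffices H : ∃ g : X →ᵇ ℝ, (∀ x, 0 ≤ g x) ∧
      (∀ x, g x ≤ G.indicator (fun _ => (1:ℝ)) x) ∧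
      ENNReal.ofReal (Λ g) + ENNReal.ofReal δ ≥ μc.innerContent ⟨G, hG⟩ by
    obtain ⟨g, h1, h2, h3⟩ := H
    exact ⟨g, h1, h2, le_trans (le_of_eq hν) h3⟩
  -- innerContent is a sup over compacts K ⊆ G
  by_cases hempty : μc.innerContent ⟨G, hG⟩ = 0
  · refine ⟨0, fun x => by simp, ?_, ?_⟩
    · intro x
      by_cases hx : x ∈ G <;> simp [hx]
    · rw [hempty]; exact zero_le
  · have hlt : μc.innerContent ⟨G, hG⟩ ≠ ⊤ := by
      refine ne_of_lt (lt_of_le_of_lt (iSup₂_le fun K _ => ?_) (by norm_num : (2:ℝ≥0∞) < ⊤))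
      rw [hμcK]
      calc ENNReal.ofReal (cRfun Λ K) ≤ ENNReal.ofReal 1 := ENNReal.ofReal_le_ofReal (hcone _)
        _ ≤ 2 := by norm_num
    obtain ⟨K, hKG, hKc⟩ := μc.innerContent_exists_compact (U := ⟨G, hG⟩) hlt
      (ε := Real.toNNReal δ / 2) (by
        simp only [ne_eq, div_eq_zero_iff, Real.toNNReal_eq_zero, not_le, not_or]
        constructor
        · exact hδ
        · norm_num)
    have hKG' : (K : Set X) ⊆ G := by simpa using hKG
    obtain ⟨f, hf0, hf1, hf01⟩ := exists_bounded_zero_one_of_closed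
      (isClosed_compl_iff.mpr hG) K.isCompact.isClosed
      (disjoint_left.mpr (fun x hx hxK => hx (hKG' hxK)))
    have hfT : f ∈ TTset (K : Set X) := ⟨fun x => (hf01 x).1, fun x hx => le_of_eq (hf1 hx).symm⟩
    refine ⟨f, fun x => (hf01 x).1, ?_, ?_⟩
    · intro x
      by_cases hx : x ∈ G
      · simpa [hx] using (hf01 x).2
      · simp only [indicator_of_notMem hx]
        exact le_of_eq (hf0 hx)
    · have hhalf : ((Real.toNNReal δ / 2 : ℝ≥0) : ℝ≥0∞) ≤ ENNReal.ofReal δ := by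
        rw [ENNReal.ofReal]
        exact ENNReal.coe_le_coe.mpr (half_le_self zero_le)
      calc μc.innerContent ⟨G, hG⟩ ≤ μc K + ((Real.toNNReal δ / 2 : ℝ≥0) : ℝ≥0∞) := hKc
        _ ≤ ENNReal.ofReal (Λ f) + ENNReal.ofReal δ := by
            refine add_le_add ?_ hhalf
            rw [hμcK]
            exact ENNReal.ofReal_le_ofReal (hcle _ f hfT)


lemma prob_seq_compact (μ : ℕ → ProbabilityMeasure X) :
    ∃ (ν : ProbabilityMeasure X) (φ : ℕ → ℕ), StrictMono φ ∧
      Tendsto (fun n => μ (φ n)) atTop (𝓝 ν) := by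
  obtain ⟨φ, hφ, Λ, hΛ⟩ := exists_subseq_lim_integrals μ
  have Λ_mono : ∀ g g' : X →ᵇ ℝ, (∀ x, g x ≤ g' x) → Λ g ≤ Λ g' := by
    intro g g' hgg
    refine le_of_tendsto_of_tendsto' (hΛ g) (hΛ g') (fun n => ?_)
    exact integral_mono (g.integrable _) (g'.integrable _) hgg
  have Λ_zero : Λ 0 = 0 := by
    refine tendsto_nhds_unique (hΛ 0) ?_
    simpa [coe_zero] using (tendsto_const_nhds : Tendsto (fun _ : ℕ => (0:ℝ)) atTop (𝓝 0))
  have Λ_add : ∀ g g' : X →ᵇ ℝ, Λ (g + g') = Λ g + Λ g' := by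
    intro g g'
    refine tendsto_nhds_unique (hΛ (g + g')) ?_
    have := (hΛ g).add (hΛ g')
    convert this using 2 with n
    simp only [coe_add, Pi.add_apply]
    exact integral_add (g.integrable _) (g'.integrable _)
  have Λ_one : Λ (const X (1:ℝ)) = 1 := by
    refine tendsto_nhds_unique (hΛ (const X 1)) ?_
    have : ∀ n : ℕ, ∫ x, (const X (1:ℝ)) x ∂(μ (φ n) : Measure X) = 1 := by
      intro n
      simp [integral_const]
    simpa [this] using (tendsto_const_nhds : Tendsto (fun _ : ℕ => (1:ℝ)) atTop (𝓝 1))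
  obtain ⟨ν, hν⟩ := riesz_limit_measure Λ Λ_mono Λ_zero Λ_add Λ_one
  refine ⟨ν, φ, hφ, ?_⟩
  apply tendsto_of_forall_isOpen_le_liminf
  intro G hG
  -- pass to ℝ≥0∞
  have main : (ν : Measure X) G ≤ atTop.liminf (fun n => (μ (φ n) : Measure X) G) := by
    refine ENNReal.le_of_forall_pos_le_add (fun ε hε hlt => ?_)
    obtain ⟨g, hg0, hgle, hgge⟩ := hν G hG (ε : ℝ) (by exact_mod_cast hε)
    have hΛle : ENNReal.ofReal (Λ g) ≤ atTop.liminf (fun n => (μ (φ n) : Measure X) G) := by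
      have hpt : ∀ n, ENNReal.ofReal (∫ x, g x ∂(μ (φ n) : Measure X)) ≤
          (μ (φ n) : Measure X) G := by
        intro n
        have hint : ∫ x, g x ∂(μ (φ n) : Measure X) ≤
            (((μ (φ n) : Measure X)) G).toReal := by
          have hind : ∫ x, G.indicator (fun _ => (1:ℝ)) x ∂(μ (φ n) : Measure X) =
              (((μ (φ n) : Measure X)) G).toReal := by
            rw [integral_indicator_const (1:ℝ) hG.measurableSet]
            simp
            rfl
          rw [← hind]
          exact integral_mono (g.integrable _)
            ((integrable_const (1:ℝ)).indicator hG.measurableSet) hgle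
        calc ENNReal.ofReal (∫ x, g x ∂(μ (φ n) : Measure X)) ≤
              ENNReal.ofReal ((((μ (φ n) : Measure X)) G).toReal) :=
                ENNReal.ofReal_le_ofReal hint
          _ = (μ (φ n) : Measure X) G := ENNReal.ofReal_toReal (measure_ne_top _ _)
      have hlim : Tendsto (fun n => ENNReal.ofReal (∫ x, g x ∂(μ (φ n) : Measure X)))
          atTop (𝓝 (ENNReal.ofReal (Λ g))) := (ENNReal.continuous_ofReal.tendsto _).comp (hΛ g)
      calc ENNReal.ofReal (Λ g)
          = atTop.liminf (fun n => ENNReal.ofReal (∫ x, g x ∂(μ (φ n) : Measure X))) :=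
            (hlim.liminf_eq).symm
        _ ≤ atTop.liminf (fun n => (μ (φ n) : Measure X) G) :=
            liminf_le_liminf (Eventually.of_forall hpt)
    calc (ν : Measure X) G ≤ ENNReal.ofReal (Λ g) + ENNReal.ofReal (ε : ℝ) := hgge
      _ = ENNReal.ofReal (Λ g) + (ε : ℝ≥0∞) := by rw [ENNReal.ofReal_coe_nnreal]
      _ ≤ atTop.liminf (fun n => (μ (φ n) : Measure X) G) + ε := add_le_add_left hΛle _
  -- convert to ℝ≥0
  have aux : (↑(atTop.liminf fun n => μ (φ n) G) : ℝ≥0∞) =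
      atTop.liminf (fun n => ((μ (φ n) G : ℝ≥0) : ℝ≥0∞)) := by
    refine Monotone.map_liminf_of_continuousAt (F := atTop) ENNReal.coe_mono
      (fun n => μ (φ n) G) ENNReal.continuous_coe.continuousAt ?_ ?_
    · exact IsBoundedUnder.isCoboundedUnder_ge ⟨1, by simp⟩
    · exact ⟨0, by simp⟩
  rw [← ENNReal.coe_le_coe, aux]
  simpa only [ProbabilityMeasure.ennreal_coeFn_eq_coeFn_toMeasure] using main

end Aux

/-- Corollary 1.4, variational form: if `P_K(f) < 0` then `P(-βa + f) < 0`
for some large enough `β > 0`. -/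
theorem stmt10 {X : Type*} [MetricSpace X] [CompactSpace X] [MeasurableSpace X] [BorelSpace X]
    (Φ : ℝ → X → X) (hΦ : IsFlow Φ)
    (a : X → ℝ) (ha : Continuous a) (ha0 : ∀ x, 0 ≤ a x)
    (hmin : ∃ μ ∈ Minv Φ, ∫ x, a x ∂(μ : Measure X) = 0)
    (h : ProbabilityMeasure X → ℝ)
    (hbd : ∃ C : ℝ, ∀ μ ∈ Minv Φ, |h μ| ≤ C)
    (husc : UpperSemicontinuousOn h (Minv Φ))
    (f : X → ℝ) (hf : Continuous f) (hPK : PresK Φ a h f < 0) :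
    ∃ β : ℝ, 0 < β ∧ Pres Φ h (fun x => -β * a x + f x) < 0 := by
  classical
  obtain ⟨C₀, hC₀⟩ := hbd
  set C := max C₀ 0 with hCdef
  have hC : ∀ μ' ∈ Minv Φ, |h μ'| ≤ C := fun μ' hμ' => le_trans (hC₀ μ' hμ') (le_max_left _ _)
  have hC0 : 0 ≤ C := le_max_right _ _
  obtain ⟨μ₀, hμ₀M, hμ₀a⟩ := hmin
  set fb : X →ᵇ ℝ := mkOfCompact ⟨f, hf⟩ with hfb
  set F := ‖fb‖ with hFdef
  have hF0 : 0 ≤ F := norm_nonneg _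
  have hintf : ∀ μ' : ProbabilityMeasure X, |∫ x, f x ∂(μ' : Measure X)| ≤ F := by
    intro μ'
    calc |∫ x, f x ∂(μ' : Measure X)| ≤ F * ((μ' : Measure X) univ).toReal :=
          norm_integral_le_of_norm_le_const (Eventually.of_forall (fun x => fb.norm_coe_le_norm x))
      _ = F := by simp
  have hia : ∀ μ' : ProbabilityMeasure X, Integrable a (μ' : Measure X) := by
    intro μ'
    have := (mkOfCompact ⟨a, ha⟩ : X →ᵇ ℝ).integrable (μ' : Measure X)
    exact this
  have hif : ∀ μ' : ProbabilityMeasure X, Integrable f (μ' : Measure X) := by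
    intro μ'
    have := fb.integrable (μ' : Measure X)
    exact this
  set c := PresK Φ a h f with hcdef
  -- Step 1 : minimizing measures give full measure to K and value ≤ c
  have hKmeas : ∀ μ' : ProbabilityMeasure X, μ' ∈ Minv Φ → ∫ x, a x ∂(μ' : Measure X) = 0 →
      (μ' : Measure X) (Kset Φ a) = 1 := by
    intro μ' hμ' ha'
    set S0 : Set (Set X) := {U | IsOpen U ∧ (μ' : Measure X) U = 0} with hS0
    have hV : (msupport (μ' : Measure X))ᶜ = ⋃₀ S0 := by
      ext x
      simp only [mem_compl_iff, msupport, mem_setOf_eq, not_forall, mem_sUnion, hS0]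
      constructor
      · rintro ⟨U, hUo, hxU, hU⟩
        exact ⟨U, ⟨hUo, by simpa [pos_iff_ne_zero] using hU⟩, hxU⟩
      · rintro ⟨U, ⟨hUo, hU0⟩, hxU⟩
        exact ⟨U, hUo, hxU, by simp [hU0]⟩
    have hμV : (μ' : Measure X) (⋃₀ S0) = 0 := by
      obtain ⟨T, hTc, hTS, hTeq⟩ :=
        TopologicalSpace.isOpen_sUnion_countable S0 (fun U hU => hU.1)
      rw [← hTeq]
      exact (measure_sUnion_null_iff hTc).mpr (fun U hU => (hTS hU).2)
    have hVopen : IsOpen ((msupport (μ' : Measure X))ᶜ) := by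
      rw [hV]; exact isOpen_sUnion (fun U hU => hU.1)
    have hmsupp : (μ' : Measure X) (msupport (μ' : Measure X)) = 1 := by
      have hc0 : (μ' : Measure X) ((msupport (μ' : Measure X))ᶜ) = 0 := by rw [hV]; exact hμV
      have := measure_compl (μ := (μ' : Measure X)) (s := (msupport (μ' : Measure X))ᶜ)
        hVopen.measurableSet (measure_ne_top _ _)
      rw [compl_compl] at this
      rw [this, hc0]
      simp
    have hsub : msupport (μ' : Measure X) ⊆ Kset Φ a := by
      intro x hx
      refine subset_closure ?_
      exact mem_biUnion (show μ' ∈ {μ ∈ Minv Φ | ∫ x, a x ∂(μ : Measure X) = 0} from ⟨hμ', ha'⟩) hx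
    refine le_antisymm (le_trans (measure_mono (subset_univ _)) (by simp)) ?_
    calc (1 : ℝ≥0∞) = (μ' : Measure X) (msupport (μ' : Measure X)) := hmsupp.symm
      _ ≤ (μ' : Measure X) (Kset Φ a) := measure_mono hsub
  have hbddK : BddAbove {r : ℝ | ∃ μ ∈ Minv Φ,
      (μ : Measure X) (Kset Φ a) = 1 ∧ r = h μ + ∫ x, f x ∂(μ : Measure X)} := by
    refine ⟨C + F, ?_⟩
    rintro r ⟨ρ, hρ, -, rfl⟩
    have h1 := (abs_le.mp (hC ρ hρ)).2
    have h2 := (abs_le.mp (hintf ρ)).2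
    linarith
  have hM1 : ∀ μ' ∈ Minv Φ, ∫ x, a x ∂(μ' : Measure X) = 0 →
      h μ' + ∫ x, f x ∂(μ' : Measure X) ≤ c := by
    intro μ' hμ' ha'
    exact le_csSup hbddK ⟨μ', hμ', hKmeas μ' hμ' ha', rfl⟩
  -- Step 2 : the epsilon claim
  have hM2 : ∃ ε : ℝ, 0 < ε ∧ ∀ μ' ∈ Minv Φ, ∫ x, a x ∂(μ' : Measure X) < ε →
      h μ' + ∫ x, f x ∂(μ' : Measure X) ≤ c / 2 := by
    by_contra hcon
    push_neg at hcon
    have hseq : ∀ n : ℕ, ∃ μ' ∈ Minv Φ, ∫ x, a x ∂(μ' : Measure X) < 1 / (n + 1) ∧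
        c / 2 < h μ' + ∫ x, f x ∂(μ' : Measure X) := by
      intro n
      obtain ⟨μ', hμ', hlt, hgt⟩ := hcon (1 / (n + 1)) (by positivity)
      exact ⟨μ', hμ', hlt, hgt⟩
    choose μs hμsM hμsa hμsG using hseq
    obtain ⟨ν, φ, hφ, hten⟩ := prob_seq_compact μs
    have hintcont : ∀ g : X →ᵇ ℝ, Tendsto (fun n => ∫ x, g x ∂(μs (φ n) : Measure X))
        atTop (𝓝 (∫ x, g x ∂(ν : Measure X))) :=
      fun g => ProbabilityMeasure.tendsto_iff_forall_integral_tendsto.mp hten g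
    -- ν is invariant
    have hνM : ν ∈ Minv Φ := by
      intro t
      have hcont : Continuous (Φ t) := hΦ.1.comp (continuous_const.prodMk continuous_id)
      have hmap := ProbabilityMeasure.tendsto_map_of_tendsto_of_continuous
        (fun n => μs (φ n)) ν hten hcont
      have heq : ∀ n, (μs (φ n)).map hcont.measurable.aemeasurable = μs (φ n) := by
        intro n
        apply ProbabilityMeasure.toMeasure_injective
        rw [ProbabilityMeasure.toMeasure_map]
        exact hμsM (φ n) t
      rw [tendsto_congr heq] at hmap
      have : ν.map hcont.measurable.aemeasurable = ν := tendsto_nhds_unique hmap hten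
      calc (ν : Measure X).map (Φ t)
          = ((ν.map hcont.measurable.aemeasurable : ProbabilityMeasure X) : Measure X) :=
            (ProbabilityMeasure.toMeasure_map ν hcont.measurable.aemeasurable).symm
        _ = (ν : Measure X) := by rw [this]
    -- the a-integral of ν vanishes
    have hνa : ∫ x, a x ∂(ν : Measure X) = 0 := by
      have h1 : Tendsto (fun n => ∫ x, a x ∂(μs (φ n) : Measure X)) atTop
          (𝓝 (∫ x, a x ∂(ν : Measure X))) := by
        have := hintcont (mkOfCompact ⟨a, ha⟩)
        simpa using this
      have h2 : Tendsto (fun n => ∫ x, a x ∂(μs (φ n) : Measure X)) atTop (𝓝 0) := by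
        refine squeeze_zero (f := fun n : ℕ => ∫ x, a x ∂(μs (φ n) : Measure X))
          (g := fun n : ℕ => 1 / ((n : ℝ) + 1))
          (fun n => integral_nonneg (fun x => ha0 x)) (fun n => ?_)
          tendsto_one_div_add_atTop_nhds_zero_nat
        refine le_trans (le_of_lt (hμsa (φ n))) ?_
        have hn : (n : ℝ) + 1 ≤ (φ n : ℝ) + 1 := by
          have : n ≤ φ n := hφ.le_apply
          exact_mod_cast add_le_add_left (Nat.cast_le.mpr this) 1
        exact one_div_le_one_div_of_le (by positivity) hn
      exact tendsto_nhds_unique h1 h2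
    have hle := hM1 ν hνM hνa
    -- upper semicontinuity gives the contradiction
    have hcneg : c < 0 := hPK
    have htenW : Tendsto (fun n => μs (φ n)) atTop (𝓝[Minv Φ] ν) :=
      tendsto_nhdsWithin_iff.mpr ⟨hten, Eventually.of_forall (fun n => hμsM (φ n))⟩
    have hev1 : ∀ᶠ n in atTop, h (μs (φ n)) < h ν + (-c / 4) :=
      htenW.eventually (husc ν hνM _ (by linarith))
    have hev2 : ∀ᶠ n in atTop, ∫ x, f x ∂(μs (φ n) : Measure X) <
        ∫ x, f x ∂(ν : Measure X) + (-c / 4) := by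
      have := hintcont fb
      simp only [hfb, mkOfCompact_apply, ContinuousMap.coe_mk] at this
      exact this.eventually_lt_const (by linarith)
    obtain ⟨n, hn1, hn2⟩ := (hev1.and hev2).exists
    have := hμsG (φ n)
    linarith
  obtain ⟨ε, hε, hεP⟩ := hM2
  refine ⟨(C + F + 1) / ε, by positivity, ?_⟩
  set β := (C + F + 1) / ε with hβdef
  have hβpos : 0 < β := by positivity
  have hβε : β * ε = C + F + 1 := div_mul_cancel₀ _ (ne_of_gt hε)
  have hne : {r : ℝ | ∃ μ ∈ Minv Φ,
      r = h μ + ∫ x, (-β * a x + f x) ∂(μ : Measure X)}.Nonempty :=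
    ⟨h μ₀ + ∫ x, (-β * a x + f x) ∂(μ₀ : Measure X), μ₀, hμ₀M, rfl⟩
  have hub : ∀ r ∈ {r : ℝ | ∃ μ ∈ Minv Φ,
      r = h μ + ∫ x, (-β * a x + f x) ∂(μ : Measure X)}, r ≤ max (c / 2) (-1) := by
    rintro r ⟨μ', hμ', rfl⟩
    have hint : ∫ x, (-β * a x + f x) ∂(μ' : Measure X) =
        -β * ∫ x, a x ∂(μ' : Measure X) + ∫ x, f x ∂(μ' : Measure X) := by
      rw [integral_add ((hia μ').const_mul (-β)) (hif μ'), integral_const_mul]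
    have hann : 0 ≤ ∫ x, a x ∂(μ' : Measure X) := integral_nonneg (fun x => ha0 x)
    rcases lt_or_ge (∫ x, a x ∂(μ' : Measure X)) ε with hlt | hge
    · refine le_max_of_le_left ?_
      have := hεP μ' hμ' hlt
      rw [hint]
      nlinarith
    · refine le_max_of_le_right ?_
      have h1 := (abs_le.mp (hC μ' hμ')).2
      have h2 := (abs_le.mp (hintf μ')).2
      have h3 : β * ε ≤ β * ∫ x, a x ∂(μ' : Measure X) :=
        mul_le_mul_of_nonneg_left hge (le_of_lt hβpos)
      rw [hint]
      nlinarith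
  have hfinal : Pres Φ h (fun x => -β * a x + f x) ≤ max (c / 2) (-1) := csSup_le hne hub
  refine lt_of_le_of_lt hfinal ?_
  apply max_lt
  · linarith [hPK]
  · norm_num
end
end

section
/- (K is null for ergodic measures not minimizing; in particular K has zero Liouville measure) Let ν ∈ 𝔐 be ergodic for the flow, meaning that every Borel set s ⊆ X with (Φ^t)⁻¹(s) = s for all t ∈ ℝ satisfies ν(s) = 0 or ν(s) = 1. If ∫_X a dν > 0, then ν(K) = 0. -/
open MeasureTheory Filter Topology Set

noncomputable section

lemma vanish_on_msupport {X : Type*} [MetricSpace X] [CompactSpace X] [MeasurableSpace X]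
    [BorelSpace X] (μ : Measure X) [IsFiniteMeasure μ] (f : X → ℝ) (hf : Continuous f)
    (hf0 : ∀ x, 0 ≤ f x) (hint : ∫ x, f x ∂μ = 0) {x : X} (hx : x ∈ msupport μ) :
    f x = 0 := by
  by_contra h
  have hfx : 0 < f x := lt_of_le_of_ne (hf0 x) (Ne.symm h)
  set U := {y | f x / 2 < f y} with hU
  have hUopen : IsOpen U := isOpen_lt continuous_const hf
  have hxU : x ∈ U := by simp only [hU, mem_setOf_eq]; linarith
  have hμU : 0 < μ U := hx U hUopen hxU
  have hfi : Integrable f μ := hf.integrable_of_hasCompactSupport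
    (HasCompactSupport.of_compactSpace f)
  have h1 : (f x / 2) * (μ U).toReal ≤ ∫ y in U, f y ∂μ :=
    setIntegral_ge_of_const_le_real hUopen.measurableSet (measure_ne_top μ U)
      (fun y hy => le_of_lt hy) hfi.integrableOn
  have h2 : ∫ y in U, f y ∂μ ≤ ∫ y, f y ∂μ :=
    setIntegral_le_integral hfi (Filter.Eventually.of_forall hf0)
  have h3 : 0 < (f x / 2) * (μ U).toReal := by
    apply mul_pos (by linarith)
    exact ENNReal.toReal_pos hμU.ne' (measure_ne_top μ U)
  linarith [hint ▸ (h1.trans h2)]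

/-- `K` is null for every ergodic invariant measure which is not minimizing. -/
theorem stmt12 {X : Type*} [MetricSpace X] [CompactSpace X] [MeasurableSpace X] [BorelSpace X]
    (Φ : ℝ → X → X) (hΦ : IsFlow Φ)
    (a : X → ℝ) (ha : Continuous a) (ha0 : ∀ x, 0 ≤ a x)
    (hmin : ∃ μ ∈ Minv Φ, ∫ x, a x ∂(μ : Measure X) = 0)
    (ν : ProbabilityMeasure X) (hν : ν ∈ Minv Φ)
    (herg : ∀ s : Set X, MeasurableSet s → (∀ t : ℝ, Φ t ⁻¹' s = s) →
      (ν : Measure X) s = 0 ∨ (ν : Measure X) s = 1)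
    (hpos : 0 < ∫ x, a x ∂(ν : Measure X)) :
    (ν : Measure X) (Kset Φ a) = 0 := by
  obtain ⟨hΦc, hΦ0, hΦadd⟩ := hΦ
  have hΦt : ∀ t, Continuous (Φ t) := fun t =>
    hΦc.comp (continuous_const.prodMk continuous_id : Continuous fun x : X => (t, x))
  -- Z : the set of points whose whole orbit lies in {a = 0}
  set Z : Set X := {x | ∀ t : ℝ, a (Φ t x) = 0} with hZ
  have hZclosed : IsClosed Z := by
    have : Z = ⋂ t : ℝ, (fun x => a (Φ t x)) ⁻¹' {0} := by
      ext x; simp [hZ]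
    rw [this]
    exact isClosed_iInter fun t => IsClosed.preimage (ha.comp (hΦt t)) isClosed_singleton
  have hZinv : ∀ t : ℝ, Φ t ⁻¹' Z = Z := by
    intro t
    ext x
    simp only [mem_preimage, hZ, mem_setOf_eq]
    constructor
    · intro hx s
      have := hx (s - t)
      rwa [← Function.comp_apply (f := Φ (s - t)) (g := Φ t), ← hΦadd, sub_add_cancel] at this
    · intro hx s
      have := hx (s + t)
      rwa [hΦadd] at this
  -- each minimizing measure's support lies in Z
  have hsupp : ∀ μ : ProbabilityMeasure X, μ ∈ Minv Φ → ∫ x, a x ∂(μ : Measure X) = 0 →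
      msupport (μ : Measure X) ⊆ Z := by
    intro μ hμinv hμ0 x hx t
    have hmap := hμinv t
    have hint : ∫ x, a (Φ t x) ∂(μ : Measure X) = 0 := by
      rw [← integral_map (hΦt t).aemeasurable (ha.aestronglyMeasurable), hmap]
      exact hμ0
    exact vanish_on_msupport (μ : Measure X) (fun x => a (Φ t x)) (ha.comp (hΦt t))
      (fun x => ha0 _) hint hx
  have hKZ : Kset Φ a ⊆ Z := by
    apply closure_minimal _ hZclosed
    intro x hx
    simp only [mem_iUnion] at hx
    obtain ⟨μ, ⟨hμinv, hμ0⟩, hxμ⟩ := hx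
    exact hsupp μ hμinv hμ0 hxμ
  -- ergodicity: ν Z = 0 or 1
  rcases herg Z hZclosed.measurableSet hZinv with h0 | h1
  · exact measure_mono_null hKZ h0
  · exfalso
    have haZ : ∀ x ∈ Z, a x = 0 := by
      intro x hx
      have := hx 0
      rwa [hΦ0] at this
    have hZc : (ν : Measure X) Zᶜ = 0 := by
      have hc := measure_compl (μ := (ν : Measure X)) hZclosed.measurableSet
        (measure_ne_top _ Z)
      rw [h1] at hc
      simpa using hc
    have hae : a =ᵐ[(ν : Measure X)] 0 := by
      rw [Filter.EventuallyEq, ae_iff]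
      refine measure_mono_null ?_ hZc
      intro x hx hxZ
      exact hx (by simpa using haZ x hxZ)
    rw [integral_congr_ae hae] at hpos
    simp at hpos
end
end

section
/- (Monotonicity and full convergence of the damped pressure) For every continuous f : X → ℝ, the function β ↦ P(−β a + f) is nonincreasing on [0,∞) and bounded below by P_K(f); consequently the limit lim_{β→+∞} P(−β a + f) exists and equals P_K(f), where P(g) := sup_{μ∈𝔐} ( h(μ) + ∫_X g dμ ) and P_K(f) := sup { h(μ) + ∫_X f dμ : μ ∈ 𝔐, μ(K) = 1 }. -/
open MeasureTheory Filter Topology Set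

noncomputable section

section Aux
open Metric ENNReal

namespace Stmt14Aux


variable {X : Type*} [MetricSpace X] [CompactSpace X] [MeasurableSpace X] [BorelSpace X]

/-- Every sequence of probability measures on a compact metric space converges along any
ultrafilter. -/
theorem exists_tendsto_ultrafilter (U : Ultrafilter ℕ) (μ : ℕ → ProbabilityMeasure X) :
    ∃ ν : ProbabilityMeasure X, Tendsto μ (U : Filter ℕ) (𝓝 ν) := by
  -- Step 1: ultrafilter limits of measures of sets
  have hex : ∀ S : Set X, ∃ x : ℝ≥0∞,
      Tendsto (fun n => (μ n : Measure X) S) (U : Filter ℕ) (𝓝 x) := by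
    intro S
    obtain ⟨x, -, hx⟩ := isCompact_univ.ultrafilter_le_nhds
      (U.map fun n => (μ n : Measure X) S) (by simp)
    exact ⟨x, hx⟩
  choose m hm using hex
  have m_mono : ∀ {S T : Set X}, S ⊆ T → m S ≤ m T := fun {S T} hST =>
    le_of_tendsto_of_tendsto' (hm S) (hm T) (fun n => measure_mono hST)
  have m_univ : m univ = 1 := by
    refine tendsto_nhds_unique (hm univ) ?_
    simpa using tendsto_const_nhds
  have m_le_one : ∀ S : Set X, m S ≤ 1 := fun S => m_univ ▸ m_mono (subset_univ S)
  have m_ne_top : ∀ S : Set X, m S ≠ ∞ := fun S => ((m_le_one S).trans_lt one_lt_top).ne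
  have m_add : ∀ {S T : Set X}, Disjoint S T → MeasurableSet T → m (S ∪ T) = m S + m T := by
    intro S T hd hT
    refine tendsto_nhds_unique (hm (S ∪ T)) ?_
    have := (hm S).add (hm T)
    convert this using 2 with n
    exact measure_union hd hT
  have m_union_le : ∀ S T : Set X, m (S ∪ T) ≤ m S + m T := fun S T =>
    le_of_tendsto_of_tendsto' (hm (S ∪ T)) ((hm S).add (hm T)) (fun n => measure_union_le S T)
  -- Step 2: a content from `m`
  set ν : TopologicalSpace.Compacts X → ℝ≥0∞ :=
    fun K => ⨅ (V : TopologicalSpace.Opens X) (_ : (K : Set X) ⊆ V), m V with hν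
  have ν_le : ∀ (K : TopologicalSpace.Compacts X) (V : TopologicalSpace.Opens X),
      (K : Set X) ⊆ V → ν K ≤ m V := by
    intro K V hKV
    exact iInf₂_le V hKV
  have ν_le_one : ∀ K, ν K ≤ 1 := by
    intro K
    exact (ν_le K ⊤ (subset_univ _)).trans (by simpa using m_le_one univ)
  have ν_ne_top : ∀ K, ν K ≠ ∞ := fun K => ((ν_le_one K).trans_lt one_lt_top).ne
  have le_ν : ∀ (K : TopologicalSpace.Compacts X), m K ≤ ν K := by
    intro K
    refine le_iInf₂ fun V hKV => m_mono hKV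
  have ν_mono : ∀ K₁ K₂ : TopologicalSpace.Compacts X, (K₁ : Set X) ⊆ K₂ → ν K₁ ≤ ν K₂ :=
    fun K₁ K₂ h => le_iInf₂ fun V hKV => ν_le K₁ V (h.trans hKV)
  have ν_sup_le : ∀ K₁ K₂ : TopologicalSpace.Compacts X, ν (K₁ ⊔ K₂) ≤ ν K₁ + ν K₂ := by
    intro K₁ K₂
    refine ENNReal.le_of_forall_pos_le_add fun ε hε _ => ?_
    have hε2 : ((ε : ℝ≥0∞) / 2) ≠ 0 := by
      simp [ENNReal.div_eq_zero_iff, hε.ne']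
    have h1 : ν K₁ < ν K₁ + ε / 2 := ENNReal.lt_add_right (ν_ne_top K₁) hε2
    have h2 : ν K₂ < ν K₂ + ε / 2 := ENNReal.lt_add_right (ν_ne_top K₂) hε2
    rw [hν] at h1 h2
    obtain ⟨V₁, hV₁⟩ := iInf_lt_iff.mp h1
    obtain ⟨hKV₁, hV₁'⟩ := iInf_lt_iff.mp hV₁
    obtain ⟨V₂, hV₂⟩ := iInf_lt_iff.mp h2
    obtain ⟨hKV₂, hV₂'⟩ := iInf_lt_iff.mp hV₂
    have : ν (K₁ ⊔ K₂) ≤ m (V₁ ⊔ V₂) := by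
      refine ν_le _ (V₁ ⊔ V₂) ?_
      simp only [TopologicalSpace.Compacts.coe_sup, TopologicalSpace.Opens.coe_sup]
      exact union_subset_union hKV₁ hKV₂
    refine this.trans ?_
    have : m (V₁ ⊔ V₂) ≤ m V₁ + m V₂ := m_union_le _ _
    refine this.trans ?_
    calc m ↑V₁ + m ↑V₂ ≤ (ν K₁ + ε / 2) + (ν K₂ + ε / 2) := add_le_add hV₁'.le hV₂'.le
    _ = ν K₁ + ν K₂ + (ε / 2 + ε / 2) := by ring
    _ = ν K₁ + ν K₂ + ε := by rw [ENNReal.add_halves]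
  have ν_sup_disjoint : ∀ K₁ K₂ : TopologicalSpace.Compacts X, Disjoint (K₁ : Set X) K₂ →
      ν (K₁ ⊔ K₂) = ν K₁ + ν K₂ := by
    intro K₁ K₂ hd
    refine le_antisymm (ν_sup_le K₁ K₂) ?_
    obtain ⟨W₁, W₂, hW₁, hW₂, hKW₁, hKW₂, hWd⟩ :=
      SeparatedNhds.of_isCompact_isCompact K₁.2 K₂.2 hd
    refine le_iInf₂ fun V hKV => ?_
    have hsub : (K₁ : Set X) ∪ (K₂ : Set X) ⊆ (V : Set X) := by
      simpa using hKV
    have h1 : ν K₁ ≤ m ((V : Set X) ∩ W₁) :=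
      ν_le K₁ ⟨(V : Set X) ∩ W₁, V.2.inter hW₁⟩
        (subset_inter (subset_union_left.trans hsub) hKW₁)
    have h2 : ν K₂ ≤ m ((V : Set X) ∩ W₂) :=
      ν_le K₂ ⟨(V : Set X) ∩ W₂, V.2.inter hW₂⟩
        (subset_inter (subset_union_right.trans hsub) hKW₂)
    have hadd : m (((V : Set X) ∩ W₁) ∪ ((V : Set X) ∩ W₂)) =
        m ((V : Set X) ∩ W₁) + m ((V : Set X) ∩ W₂) :=
      m_add (hWd.mono inter_subset_right inter_subset_right)
        ((V.2.inter hW₂).measurableSet)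
    calc ν K₁ + ν K₂ ≤ m ((V : Set X) ∩ W₁) + m ((V : Set X) ∩ W₂) := add_le_add h1 h2
    _ = m (((V : Set X) ∩ W₁) ∪ ((V : Set X) ∩ W₂)) := hadd.symm
    _ ≤ m V := m_mono (union_subset inter_subset_left inter_subset_left)
  set c : Content X :=
    { toFun := fun K => (ν K).toNNReal
      mono' := fun K₁ K₂ h => by
        have := ν_mono K₁ K₂ h
        exact ENNReal.toNNReal_mono (ν_ne_top K₂) this
      sup_disjoint' := fun K₁ K₂ hd _ _ => by
        have h := ν_sup_disjoint K₁ K₂ hd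
        rw [h, ENNReal.toNNReal_add (ν_ne_top K₁) (ν_ne_top K₂)]
      sup_le' := fun K₁ K₂ => by
        have h := ν_sup_le K₁ K₂
        have h2 := ENNReal.toNNReal_mono (by
          exact ENNReal.add_ne_top.mpr ⟨ν_ne_top K₁, ν_ne_top K₂⟩) h
        rwa [ENNReal.toNNReal_add (ν_ne_top K₁) (ν_ne_top K₂)] at h2 } with hc
  have c_eq : ∀ K : TopologicalSpace.Compacts X, (c K : ℝ≥0∞) = ν K := by
    intro K
    simp only [hc, Content.mk_apply]
    exact ENNReal.coe_toNNReal (ν_ne_top K)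
  -- Step 3: the candidate limit measure
  classical
  set E : Measure X := c.measure with hE
  have key_open : ∀ {G : Set X}, IsOpen G → E G ≤ m G := by
    intro G hG
    rw [hE, c.measure_apply hG.measurableSet, c.outerMeasure_of_isOpen G hG]
    show (⨆ (K : TopologicalSpace.Compacts X)
      (_ : (K : Set X) ⊆ (⟨G, hG⟩ : TopologicalSpace.Opens X)), (c K : ℝ≥0∞)) ≤ m G
    refine iSup₂_le fun K hK => ?_
    calc (c K : ℝ≥0∞) = ν K := c_eq K
    _ ≤ m G := ν_le K ⟨G, hG⟩ hK
  have key_closed : ∀ {C : Set X}, IsClosed C → m C ≤ E C := by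
    intro C hC
    have hCc : IsCompact C := hC.isCompact
    rw [hE, c.measure_apply hC.measurableSet]
    calc m C ≤ ν ⟨C, hCc⟩ := le_ν _
    _ = (c ⟨C, hCc⟩ : ℝ≥0∞) := (c_eq _).symm
    _ ≤ c.outerMeasure C := c.le_outerMeasure_compacts _
  have E_univ : E univ = 1 := by
    refine le_antisymm ((key_open isOpen_univ).trans m_univ.le) ?_
    have := key_closed isClosed_univ
    rwa [m_univ] at this
  haveI hEP : IsProbabilityMeasure E := ⟨E_univ⟩
  set νP : ProbabilityMeasure X := ⟨E, hEP⟩ with hνP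
  have coeνP : (νP : Measure X) = E := rfl
  refine ⟨νP, ?_⟩
  -- Step 4: convergence in the Lévy-Prokhorov metric
  set LPof : ProbabilityMeasure X → LevyProkhorov (ProbabilityMeasure X) :=
    fun p => LevyProkhorov.ofMeasure p with hLPof
  have twoSided : ∀ {δ : ℝ}, 0 < δ → ∀ (L : ℝ≥0∞) (g : ℕ → ℝ≥0∞), L ≠ ∞ →
      Tendsto g (U : Filter ℕ) (𝓝 L) →
      ∀ᶠ n in (U : Filter ℕ), g n ≤ L + ENNReal.ofReal δ ∧ L ≤ g n + ENNReal.ofReal δ := by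
    intro δ hδ L g hL hg
    have hδ0 : ENNReal.ofReal δ ≠ 0 := by
      simp only [ne_eq, ENNReal.ofReal_eq_zero, not_le]; exact hδ
    have h1 : ∀ᶠ n in (U : Filter ℕ), g n ≤ L + ENNReal.ofReal δ := by
      have hmem : Iic (L + ENNReal.ofReal δ) ∈ 𝓝 L :=
        Iic_mem_nhds (ENNReal.lt_add_right hL hδ0)
      filter_upwards [hg hmem] with n hn using hn
    have h2 : ∀ᶠ n in (U : Filter ℕ), L ≤ g n + ENNReal.ofReal δ := by
      rcases le_or_gt L (ENNReal.ofReal δ) with hLd | hLd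
      · exact Eventually.of_forall (fun n => hLd.trans le_add_self)
      · have hmem : Ioi (L - ENNReal.ofReal δ) ∈ 𝓝 L :=
          Ioi_mem_nhds (ENNReal.sub_lt_self hL (by rintro rfl; simp at hLd) hδ0)
        filter_upwards [hg hmem] with n hn
        calc L = (L - ENNReal.ofReal δ) + ENNReal.ofReal δ :=
          (tsub_add_cancel_of_le hLd.le).symm
        _ ≤ g n + ENNReal.ofReal δ := add_le_add_left (le_of_lt hn) _
    exact h1.and h2
  have key : Tendsto (fun n => LPof (μ n)) (U : Filter ℕ) (𝓝 (LPof νP)) := by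
    rw [Metric.tendsto_nhds]
    intro ε hε
    set δ : ℝ := ε / 8 with hδdef
    have hδ : 0 < δ := by positivity
    obtain ⟨t, ht⟩ := isCompact_univ.elim_finite_subcover (fun x : X => ball x δ)
      (fun x => isOpen_ball) (fun x _ => mem_iUnion.mpr ⟨x, mem_ball_self hδ⟩)
    set A : Finset X → Set X := fun S => ⋃ c ∈ (S : Set X), ball c δ with hA
    set CC : Finset X → Set X := fun S => ⋃ c ∈ (S : Set X), closedBall c δ with hCC
    have hAopen : ∀ S, IsOpen (A S) := fun S => isOpen_biUnion (fun c _ => isOpen_ball)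
    have hCclosed : ∀ S : Finset X, IsClosed (CC S) := fun S =>
      S.finite_toSet.isClosed_biUnion (fun c _ => isClosed_closedBall)
    have hev : ∀ᶠ n in (U : Filter ℕ), ∀ S ∈ t.powerset,
        ((μ n : Measure X) (CC S) ≤ m (CC S) + ENNReal.ofReal δ ∧
          m (A S) ≤ (μ n : Measure X) (A S) + ENNReal.ofReal δ) := by
      rw [Finset.eventually_all]
      intro S _
      have e1 := twoSided hδ (m (CC S)) _ (m_ne_top _) (hm (CC S))
      have e2 := twoSided hδ (m (A S)) _ (m_ne_top _) (hm (A S))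
      filter_upwards [e1, e2] with n hn1 hn2
      exact ⟨hn1.1, hn2.2⟩
    filter_upwards [hev] with n hn
    have hED : levyProkhorovEDist ((μ n) : Measure X) (νP : Measure X) ≤
        ENNReal.ofReal (4 * δ) := by
      refine levyProkhorovEDist_le_of_forall _ _ _ ?_
      intro e B he het hB
      have he4 : 4 * δ < e.toReal :=
        (ENNReal.ofReal_lt_iff_lt_toReal (by positivity) het.ne).mp he
      have heδ : ENNReal.ofReal δ ≤ e := by
        refine le_of_lt (lt_of_le_of_lt ?_ he)
        exact ENNReal.ofReal_le_ofReal (by linarith)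
      set S : Finset X := t.filter (fun c => (ball c δ ∩ B).Nonempty) with hSdef
      have hSmem : S ∈ t.powerset := Finset.mem_powerset.mpr (Finset.filter_subset _ _)
      have hBA : B ⊆ A S := by
        intro x hx
        have : x ∈ ⋃ c ∈ t, ball c δ := ht (mem_univ x)
        simp only [mem_iUnion, exists_prop] at this
        obtain ⟨c, hct, hxc⟩ := this
        have hcS : c ∈ S := by
          rw [hSdef, Finset.mem_filter]
          exact ⟨hct, ⟨x, hxc, hx⟩⟩
        exact mem_biUnion hcS hxc
      have hACC : A S ⊆ CC S :=
        iUnion₂_mono (fun c _ => ball_subset_closedBall)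
      have hCCthick : CC S ⊆ thickening e.toReal B := by
        intro x hx
        simp only [hCC, mem_iUnion, exists_prop] at hx
        obtain ⟨c, hcS, hxc⟩ := hx
        obtain ⟨b, hbball, hbB⟩ := (Finset.mem_filter.mp (Finset.mem_coe.mp hcS)).2
        refine mem_thickening_iff.mpr ⟨b, hbB, ?_⟩
        have h1 : dist x c ≤ δ := mem_closedBall.mp hxc
        have h2 : dist c b < δ := by
          have := mem_ball.mp hbball
          rwa [dist_comm] at this
        calc dist x b ≤ dist x c + dist c b := dist_triangle x c b
        _ < δ + δ := by linarith
        _ < e.toReal := by linarith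
      have hcases := hn S hSmem
      constructor
      · calc (μ n : Measure X) B ≤ (μ n : Measure X) (CC S) :=
          measure_mono (hBA.trans hACC)
        _ ≤ m (CC S) + ENNReal.ofReal δ := hcases.1
        _ ≤ E (CC S) + ENNReal.ofReal δ := add_le_add_left (key_closed (hCclosed S)) _
        _ ≤ (νP : Measure X) (thickening e.toReal B) + e := by
          rw [coeνP]
          exact add_le_add (measure_mono hCCthick) heδ
      · calc (νP : Measure X) B ≤ (νP : Measure X) (A S) := measure_mono hBA
        _ ≤ m (A S) := by rw [coeνP]; exact key_open (hAopen S)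
        _ ≤ (μ n : Measure X) (A S) + ENNReal.ofReal δ := hcases.2
        _ ≤ (μ n : Measure X) (thickening e.toReal B) + e := by
          have : A S ⊆ thickening e.toReal B := hACC.trans hCCthick
          exact add_le_add (measure_mono this) heδ
    have hdeq : dist (LPof (μ n)) (LPof νP) =
        (levyProkhorovEDist ((μ n) : Measure X) (νP : Measure X)).toReal := rfl
    have hd : dist (LPof (μ n)) (LPof νP) ≤ 4 * δ := by
      rw [hdeq]
      have h2 := ENNReal.toReal_mono ENNReal.ofReal_ne_top hED
      rwa [ENNReal.toReal_ofReal (by positivity)] at h2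
    refine lt_of_le_of_lt hd ?_
    rw [hδdef]; linarith
  have hcont := (LevyProkhorov.continuous_toMeasure_probabilityMeasure (Ω := X)).tendsto (LPof νP)
  exact hcont.comp key



lemma compl_msupport (μ : Measure X) :
    (msupport μ)ᶜ = ⋃₀ {U : Set X | IsOpen U ∧ μ U = 0} := by
  ext x
  simp only [msupport, mem_compl_iff, mem_setOf_eq, mem_sUnion]
  push_neg
  constructor
  · rintro ⟨U, hU, hxU, hpos⟩
    exact ⟨U, ⟨hU, le_antisymm hpos (zero_le)⟩, hxU⟩
  · rintro ⟨U, ⟨hU, hU0⟩, hxU⟩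
    exact ⟨U, hU, hxU, by simp [hU0]⟩

lemma isClosed_msupport (μ : Measure X) : IsClosed (msupport μ) := by
  rw [← isOpen_compl_iff, compl_msupport]
  exact isOpen_sUnion fun s hs => hs.1

lemma msupport_compl_null (μ : Measure X) : μ (msupport μ)ᶜ = 0 := by
  rw [compl_msupport]
  obtain ⟨T, hTc, hTsub, hTeq⟩ :=
    TopologicalSpace.isOpen_sUnion_countable {U : Set X | IsOpen U ∧ μ U = 0}
      (fun s hs => hs.1)
  rw [← hTeq, measure_sUnion_null_iff hTc]
  exact fun s hs => (hTsub hs).2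

lemma msupport_full (μ : Measure X) [IsProbabilityMeasure μ] : μ (msupport μ) = 1 := by
  have := measure_add_measure_compl (μ := μ) (isClosed_msupport μ).measurableSet
  rwa [msupport_compl_null, add_zero, measure_univ] at this

lemma integrable_of_continuous (g : X → ℝ) (hg : Continuous g) (μ : Measure X)
    [IsFiniteMeasure μ] : Integrable g μ :=
  hg.integrable_of_hasCompactSupport (HasCompactSupport.of_compactSpace g)

lemma abs_integral_le (g : X → ℝ) (hg : Continuous g) (μ : Measure X)
    [IsProbabilityMeasure μ] :
    |∫ x, g x ∂μ| ≤ ‖BoundedContinuousFunction.mkOfCompact (⟨g, hg⟩ : C(X, ℝ))‖ := by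
  have hb : ∀ᵐ x ∂μ, ‖g x‖ ≤ ‖BoundedContinuousFunction.mkOfCompact (⟨g, hg⟩ : C(X, ℝ))‖ :=
    Eventually.of_forall fun x =>
      BoundedContinuousFunction.norm_coe_le_norm
        (BoundedContinuousFunction.mkOfCompact (⟨g, hg⟩ : C(X, ℝ))) x
  have := norm_integral_le_of_norm_le_const hb
  simpa [Real.norm_eq_abs, measure_univ] using this

variable {Φ : ℝ → X → X} {a : X → ℝ}

lemma a_zero_on_K (ha : Continuous a) (ha0 : ∀ x, 0 ≤ a x) :
    ∀ x ∈ Kset Φ a, a x = 0 := by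
  intro x hx
  have hsub : (⋃ μ ∈ {μ ∈ Minv Φ | ∫ x, a x ∂(μ : Measure X) = 0},
      msupport (μ : Measure X)) ⊆ a ⁻¹' {0} := by
    rintro y hy
    rw [mem_iUnion₂] at hy
    obtain ⟨μ, hμ, hysupp⟩ := hy
    by_contra hay
    have hay' : a y ≠ 0 := by simpa using hay
    have hpos : 0 < a y := lt_of_le_of_ne (ha0 y) (Ne.symm hay')
    have hae : a =ᵐ[(μ : Measure X)] 0 :=
      (integral_eq_zero_iff_of_nonneg ha0 (integrable_of_continuous a ha _)).mp hμ.2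
    have h0 : (μ : Measure X) (a ⁻¹' (Ioi 0)) = 0 := by
      refine measure_mono_null (t := {z | ¬ a z = 0}) ?_ (ae_iff.mp hae)
      intro z hz
      simp only [mem_setOf_eq]
      exact ne_of_gt hz
    have := hysupp _ (isOpen_Ioi.preimage ha) hpos
    rw [h0] at this
    exact lt_irrefl _ this
  exact closure_minimal hsub ((isClosed_singleton).preimage ha) hx

lemma K_full {μ : ProbabilityMeasure X}
    (hM : μ ∈ Minv Φ) (hia : ∫ x, a x ∂(μ : Measure X) = 0) :
    (μ : Measure X) (Kset Φ a) = 1 := by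
  have hsub : msupport (μ : Measure X) ⊆ Kset Φ a := by
    refine subset_trans ?_ subset_closure
    intro x hx
    exact mem_biUnion ⟨hM, hia⟩ hx
  refine le_antisymm prob_le_one ?_
  calc (1:ENNReal) = (μ : Measure X) (msupport (μ : Measure X)) := (msupport_full _).symm
  _ ≤ (μ : Measure X) (Kset Φ a) := measure_mono hsub

lemma isClosed_K : IsClosed (Kset Φ a) := isClosed_closure

lemma ae_zero_of_K_full {μ : ProbabilityMeasure X}
    (haK : ∀ x ∈ Kset Φ a, a x = 0)
    (h1 : (μ : Measure X) (Kset Φ a) = 1) : a =ᵐ[(μ : Measure X)] 0 := by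
  have hc : (μ : Measure X) (Kset Φ a)ᶜ = 0 :=
    (prob_compl_eq_zero_iff isClosed_K.measurableSet).mpr h1
  refine ae_iff.mpr (measure_mono_null ?_ hc)
  intro x hx
  simp only [mem_setOf_eq] at hx
  simp only [mem_compl_iff]
  exact fun hK => hx (by simpa using haK x hK)

end Stmt14Aux

end Aux

/-- The damped pressure `β ↦ P(-βa + f)` is nonincreasing on `[0,∞)`, bounded
below by `P_K(f)`, and converges to `P_K(f)` as `β → ∞`. -/
theorem stmt14 {X : Type*} [MetricSpace X] [CompactSpace X] [MeasurableSpace X] [BorelSpace X]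
    (Φ : ℝ → X → X) (hΦ : IsFlow Φ)
    (a : X → ℝ) (ha : Continuous a) (ha0 : ∀ x, 0 ≤ a x)
    (hmin : ∃ μ ∈ Minv Φ, ∫ x, a x ∂(μ : Measure X) = 0)
    (h : ProbabilityMeasure X → ℝ)
    (hbd : ∃ C : ℝ, ∀ μ ∈ Minv Φ, |h μ| ≤ C)
    (husc : UpperSemicontinuousOn h (Minv Φ))
    (f : X → ℝ) (hf : Continuous f) :
    (∀ β₁ β₂ : ℝ, 0 ≤ β₁ → β₁ ≤ β₂ →
      Pres Φ h (fun x => -β₂ * a x + f x) ≤ Pres Φ h (fun x => -β₁ * a x + f x)) ∧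
    (∀ β : ℝ, 0 ≤ β → PresK Φ a h f ≤ Pres Φ h (fun x => -β * a x + f x)) ∧
    Tendsto (fun β : ℝ => Pres Φ h (fun x => -β * a x + f x)) atTop
      (𝓝 (PresK Φ a h f)) := by
  classical
  obtain ⟨μ₀, hμ₀M, hμ₀a⟩ := hmin
  obtain ⟨C, hC⟩ := hbd
  have hCbd : ∀ μ ∈ Minv Φ, h μ ≤ C ∧ -C ≤ h μ := fun μ hμ => by
    have := abs_le.mp (hC μ hμ); exact ⟨this.2, this.1⟩
  set F : ℝ := ‖BoundedContinuousFunction.mkOfCompact (⟨f, hf⟩ : C(X, ℝ))‖ with hFdef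
  have hF : ∀ μ : ProbabilityMeasure X, |∫ x, f x ∂(μ : Measure X)| ≤ F := fun μ =>
    Stmt14Aux.abs_integral_le f hf _
  have hint : ∀ (g : X → ℝ), Continuous g → ∀ μ : ProbabilityMeasure X,
      Integrable g (μ : Measure X) := fun g hg μ => Stmt14Aux.integrable_of_continuous g hg _
  have hIntEq : ∀ (β : ℝ) (μ : ProbabilityMeasure X),
      ∫ x, (-β * a x + f x) ∂(μ : Measure X)
        = -β * ∫ x, a x ∂(μ : Measure X) + ∫ x, f x ∂(μ : Measure X) := by
    intro β μ
    rw [integral_add ((hint a ha μ).const_mul (-β)) (hint f hf μ), integral_const_mul]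
  have ha_nn : ∀ μ : ProbabilityMeasure X, 0 ≤ ∫ x, a x ∂(μ : Measure X) := fun μ =>
    integral_nonneg ha0
  set S : ℝ → Set ℝ := fun β =>
    {r : ℝ | ∃ μ ∈ Minv Φ, r = h μ + ∫ x, (-β * a x + f x) ∂(μ : Measure X)} with hSdef
  have hPres : ∀ β : ℝ, Pres Φ h (fun x => -β * a x + f x) = sSup (S β) := fun β => rfl
  set SK : Set ℝ :=
    {r : ℝ | ∃ μ ∈ Minv Φ, (μ : Measure X) (Kset Φ a) = 1
      ∧ r = h μ + ∫ x, f x ∂(μ : Measure X)} with hSKdef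
  have hPresK : PresK Φ a h f = sSup SK := rfl
  have hSne : ∀ β : ℝ, (S β).Nonempty := fun β => ⟨_, μ₀, hμ₀M, rfl⟩
  have hSbound : ∀ β : ℝ, 0 ≤ β → ∀ r ∈ S β, r ≤ C + F := by
    rintro β hβ r ⟨μ, hμM, rfl⟩
    have h1 := (hCbd μ hμM).1
    have h2 := abs_le.mp (hF μ)
    have h3 : -β * ∫ x, a x ∂(μ : Measure X) ≤ 0 :=
      mul_nonpos_of_nonpos_of_nonneg (by linarith) (ha_nn μ)
    rw [hIntEq]
    linarith [h2.2]
  have hSbdd : ∀ β : ℝ, 0 ≤ β → BddAbove (S β) := fun β hβ =>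
    ⟨C + F, fun r hr => hSbound β hβ r hr⟩
  have part1 : ∀ β₁ β₂ : ℝ, 0 ≤ β₁ → β₁ ≤ β₂ → sSup (S β₂) ≤ sSup (S β₁) := by
    intro β₁ β₂ hβ₁ h12
    refine csSup_le (hSne β₂) ?_
    rintro r ⟨μ, hμM, rfl⟩
    refine le_csSup_of_le (hSbdd β₁ hβ₁) ⟨μ, hμM, rfl⟩ ?_
    have hmono : ∫ x, (-β₂ * a x + f x) ∂(μ : Measure X)
        ≤ ∫ x, (-β₁ * a x + f x) ∂(μ : Measure X) := by
      rw [hIntEq, hIntEq]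
      nlinarith [ha_nn μ]
    linarith
  have haK := Stmt14Aux.a_zero_on_K (Φ := Φ) ha ha0
  have hμ₀K : (μ₀ : Measure X) (Kset Φ a) = 1 := Stmt14Aux.K_full hμ₀M hμ₀a
  have hSKne : SK.Nonempty := ⟨_, μ₀, hμ₀M, hμ₀K, rfl⟩
  have hSKbdd : BddAbove SK := by
    refine ⟨C + F, ?_⟩
    rintro r ⟨μ, hμM, hK, rfl⟩
    have h2 := abs_le.mp (hF μ)
    have h1 := (hCbd μ hμM).1
    linarith [h2.2]
  have intf_eq : ∀ μ : ProbabilityMeasure X, (μ : Measure X) (Kset Φ a) = 1 → ∀ β : ℝ,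
      ∫ x, (-β * a x + f x) ∂(μ : Measure X) = ∫ x, f x ∂(μ : Measure X) := by
    intro μ h1 β
    have hae := Stmt14Aux.ae_zero_of_K_full haK h1
    refine integral_congr_ae ?_
    filter_upwards [hae] with x hx
    simp only [Pi.zero_apply] at hx
    simp [hx]
  have part2 : ∀ β : ℝ, 0 ≤ β → sSup SK ≤ sSup (S β) := by
    intro β hβ
    refine csSup_le hSKne ?_
    rintro r ⟨μ, hμM, hK, rfl⟩
    refine le_csSup (hSbdd β hβ) ?_
    exact ⟨μ, hμM, by rw [intf_eq μ hK β]⟩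
  set L : ℝ := sSup SK with hL
  have key : ∀ ε : ℝ, 0 < ε → ∃ β₀ : ℝ, 0 ≤ β₀ ∧ sSup (S β₀) ≤ L + ε := by
    intro ε hε
    by_contra hcon
    push_neg at hcon
    have hpick : ∀ n : ℕ, ∃ μ ∈ Minv Φ,
        L + ε < h μ + ∫ x, (-(n : ℝ) * a x + f x) ∂(μ : Measure X) := by
      intro n
      obtain ⟨r, hr, hlt⟩ :=
        exists_lt_of_lt_csSup (hSne (n : ℝ)) (hcon (n : ℝ) (Nat.cast_nonneg n))
      obtain ⟨μ, hμM, rfl⟩ := hr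
      exact ⟨μ, hμM, hlt⟩
    choose μs hμsM hμslt using hpick
    have hbound : ∀ n : ℕ, (n : ℝ) * ∫ x, a x ∂(μs n : Measure X) ≤ C + F - (L + ε) := by
      intro n
      have hlt := hμslt n
      rw [hIntEq] at hlt
      have h1 := (hCbd _ (hμsM n)).1
      have h2 := abs_le.mp (hF (μs n))
      linarith [h2.2]
    have hbelow : ∀ n : ℕ, L + ε < h (μs n) + ∫ x, f x ∂(μs n : Measure X) := by
      intro n
      have hlt := hμslt n
      rw [hIntEq] at hlt
      nlinarith [ha_nn (μs n), Nat.cast_nonneg (α := ℝ) n]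
    set U := Ultrafilter.of (atTop : Filter ℕ) with hU
    have hUle : (U : Filter ℕ) ≤ atTop := Ultrafilter.of_le _
    obtain ⟨ν, hν⟩ := Stmt14Aux.exists_tendsto_ultrafilter U μs
    have hνM : ν ∈ Minv Φ := by
      intro t
      have hΦt : Continuous (Φ t) := hΦ.1.comp (Continuous.prodMk_right t)
      haveI : IsProbabilityMeasure ((ν : Measure X).map (Φ t)) :=
        Measure.isProbabilityMeasure_map hΦt.measurable.aemeasurable
      refine ext_of_forall_lintegral_eq_of_IsFiniteMeasure ?_
      intro g
      have hgm : Measurable fun x : X => ((g x : NNReal) : ENNReal) :=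
        measurable_coe_nnreal_ennreal.comp g.continuous.measurable
      rw [lintegral_map hgm hΦt.measurable]
      have hg1 := ProbabilityMeasure.tendsto_iff_forall_lintegral_tendsto.mp hν g
      have hg2 := ProbabilityMeasure.tendsto_iff_forall_lintegral_tendsto.mp hν
        (g.compContinuous (⟨Φ t, hΦt⟩ : C(X, X)))
      have heq : ∀ n : ℕ,
          (∫⁻ x, (g.compContinuous (⟨Φ t, hΦt⟩ : C(X, X))) x ∂(μs n : Measure X))
            = ∫⁻ x, g x ∂(μs n : Measure X) := by
        intro n
        conv_rhs => rw [← hμsM n t]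
        rw [lintegral_map hgm hΦt.measurable]
        rfl
      simp_rw [heq] at hg2
      exact tendsto_nhds_unique hg2 hg1
    have hta : Tendsto (fun n => ∫ x, a x ∂(μs n : Measure X)) (U : Filter ℕ)
        (𝓝 (∫ x, a x ∂(ν : Measure X))) := by
      have := ProbabilityMeasure.tendsto_iff_forall_integral_tendsto.mp hν
        (BoundedContinuousFunction.mkOfCompact (⟨a, ha⟩ : C(X, ℝ)))
      simpa using this
    have hνa : ∫ x, a x ∂(ν : Measure X) = 0 := by
      refine le_antisymm ?_ (ha_nn ν)
      have hM' : Tendsto (fun n : ℕ => (C + F - (L + ε)) / (n : ℝ)) (U : Filter ℕ) (𝓝 0) :=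
        (tendsto_const_div_atTop_nhds_zero_nat _).mono_left hUle
      refine le_of_tendsto_of_tendsto hta hM' ?_
      have hev : ∀ᶠ n : ℕ in atTop,
          ∫ x, a x ∂(μs n : Measure X) ≤ (C + F - (L + ε)) / (n : ℝ) := by
        filter_upwards [eventually_ge_atTop 1] with n hn
        have hnp : (0 : ℝ) < (n : ℝ) := by exact_mod_cast hn
        rw [le_div_iff₀ hnp]
        linarith [hbound n, mul_comm ((n : ℝ)) (∫ x, a x ∂(μs n : Measure X))]
      exact hev.filter_mono hUle
    have hνK : (ν : Measure X) (Kset Φ a) = 1 := Stmt14Aux.K_full hνM hνa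
    have hνle : h ν + ∫ x, f x ∂(ν : Measure X) ≤ L :=
      le_csSup hSKbdd ⟨ν, hνM, hνK, rfl⟩
    have hνwithin : Tendsto μs (U : Filter ℕ) (𝓝[Minv Φ] ν) :=
      tendsto_nhdsWithin_iff.mpr ⟨hν, Eventually.of_forall hμsM⟩
    have husc' := husc ν hνM (h ν + ε / 4) (by linarith)
    have ev1 : ∀ᶠ n : ℕ in (U : Filter ℕ), h (μs n) < h ν + ε / 4 :=
      hνwithin.eventually husc'
    have htf : Tendsto (fun n => ∫ x, f x ∂(μs n : Measure X)) (U : Filter ℕ)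
        (𝓝 (∫ x, f x ∂(ν : Measure X))) := by
      have := ProbabilityMeasure.tendsto_iff_forall_integral_tendsto.mp hν
        (BoundedContinuousFunction.mkOfCompact (⟨f, hf⟩ : C(X, ℝ)))
      simpa using this
    have ev2 : ∀ᶠ n : ℕ in (U : Filter ℕ),
        ∫ x, f x ∂(μs n : Measure X) < (∫ x, f x ∂(ν : Measure X)) + ε / 4 :=
      htf.eventually_lt_const (by linarith)
    obtain ⟨n, hn1, hn2⟩ := (ev1.and ev2).exists
    have := hbelow n
    linarith
  refine ⟨fun β₁ β₂ hβ₁ h12 => by rw [hPres, hPres]; exact part1 β₁ β₂ hβ₁ h12,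
    fun β hβ => by rw [hPres, hPresK]; exact part2 β hβ, ?_⟩
  rw [Metric.tendsto_atTop]
  intro ε hε
  obtain ⟨β₀, hβ₀, hβ₀le⟩ := key (ε / 2) (by linarith)
  refine ⟨β₀, fun β hβ => ?_⟩
  have hβnn : 0 ≤ β := le_trans hβ₀ hβ
  have hub : Pres Φ h (fun x => -β * a x + f x) ≤ L + ε / 2 := by
    rw [hPres]; exact (part1 β₀ β hβ₀ hβ).trans hβ₀le
  have hlb : L ≤ Pres Φ h (fun x => -β * a x + f x) := by
    rw [hPres]; exact part2 β hβnn
  rw [Real.dist_eq, hPresK, abs_lt]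
  constructor <;> linarith
end
end
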